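/- arXiv:1707.01200 — 10 statements merged into one kernel-verified Lean document; each statement's English description precedes it below -/
import Mathlib

section
/- For all integers B ≥ a ≥ 0, the sum over j from a to B of q^{2j} times the Gaussian binomial coefficient [j choose a]_q equals q^{2a} times ([B+2 choose a+2]_q minus q times [B+1 choose a+2]_q). -/
open Finset

/-- The q-Pochhammer `(q)_N = (1-q)(1-q^2)⋯(1-q^N)` as a rational function in `q`. -/
noncomputable def qPoch (N : ℕ) : RatFunc ℚ :=
  ∏ j ∈ Finset.range N, (1 - RatFunc.X ^ (j + 1))

/-- The Gaussian binomial coefficient `[M choose N]_q = (q)_M / ((q)_N (q)_{M-N})`,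
with the convention that it is `0` when `N > M`. -/
noncomputable def gaussBinom (M N : ℕ) : RatFunc ℚ :=
  if N ≤ M then qPoch M / (qPoch N * qPoch (M - N)) else 0

lemma one_sub_X_pow_ne_zero (m : ℕ) : (1 - RatFunc.X ^ (m + 1) : RatFunc ℚ) ≠ 0 := by
  have h : (1 - RatFunc.X ^ (m + 1) : RatFunc ℚ)
      = algebraMap (Polynomial ℚ) (RatFunc ℚ) (1 - Polynomial.X ^ (m + 1)) := by
    simp [map_sub, map_pow, RatFunc.algebraMap_X]
  rw [h]
  apply RatFunc.algebraMap_ne_zero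
  intro hc
  have h1 : (Polynomial.X : Polynomial ℚ) ^ (m + 1) = 1 := by
    have := sub_eq_zero.mp hc; linear_combination -this
  have := congrArg Polynomial.natDegree h1
  simp [Polynomial.natDegree_X_pow] at this

lemma qPoch_ne_zero (N : ℕ) : qPoch N ≠ 0 := by
  unfold qPoch
  exact Finset.prod_ne_zero_iff.mpr fun j _ => one_sub_X_pow_ne_zero j

lemma qPoch_zero : qPoch 0 = 1 := by simp [qPoch]

lemma qPoch_succ (N : ℕ) : qPoch (N + 1) = qPoch N * (1 - RatFunc.X ^ (N + 1)) := by
  unfold qPoch; rw [Finset.prod_range_succ]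

lemma gaussBinom_self (a : ℕ) : gaussBinom a a = 1 := by
  unfold gaussBinom
  simp [qPoch_zero, div_self (qPoch_ne_zero a)]

lemma gaussBinom_of_lt {M N : ℕ} (h : M < N) : gaussBinom M N = 0 := by
  unfold gaussBinom; rw [if_neg (by omega)]

lemma gaussBinom_pascal (n k : ℕ) (h : k ≤ n) :
    gaussBinom (n + 1) (k + 1)
      = gaussBinom n (k + 1) + RatFunc.X ^ (n - k) * gaussBinom n k := by
  rcases Nat.lt_or_ge k n with h2 | h2
  · -- k + 1 ≤ n ; write n = k + e + 1
    obtain ⟨e, rfl⟩ : ∃ e, n = k + e + 1 := ⟨n - k - 1, by omega⟩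
    unfold gaussBinom
    rw [if_pos (by omega), if_pos (by omega), if_pos (by omega)]
    have e1 : k + e + 1 + 1 - (k + 1) = e + 1 := by omega
    have e2 : k + e + 1 - (k + 1) = e := by omega
    have e3 : k + e + 1 - k = e + 1 := by omega
    rw [e1, e2, e3]
    rw [show k + e + 1 + 1 = (k + e + 1) + 1 from rfl, qPoch_succ (k + e + 1),
      qPoch_succ e, qPoch_succ k]
    have hk := qPoch_ne_zero k
    have he := qPoch_ne_zero e
    have hn := qPoch_ne_zero (k + e + 1)
    have h1 := one_sub_X_pow_ne_zero e
    have h2' := one_sub_X_pow_ne_zero k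
    field_simp
    ring_nf
  · -- k = n
    have : k = n := le_antisymm h h2
    subst this
    rw [gaussBinom_self, gaussBinom_of_lt (by omega), gaussBinom_self]
    simp

theorem sum_q_sq_pow_gaussBinom (a B : ℕ) (h : a ≤ B) :
    ∑ j ∈ Finset.Icc a B, RatFunc.X ^ (2 * j) * gaussBinom j a
      = RatFunc.X ^ (2 * a) *
        (gaussBinom (B + 2) (a + 2) - RatFunc.X * gaussBinom (B + 1) (a + 2)) := by
  induction B, h using Nat.le_induction with
  | base =>
    rw [Finset.Icc_self, Finset.sum_singleton, gaussBinom_self,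
      gaussBinom_self, gaussBinom_of_lt (by omega)]
    ring
  | succ B hB ih =>
    obtain ⟨c, rfl⟩ : ∃ c, B = a + c := ⟨B - a, by omega⟩
    rw [Finset.sum_Icc_succ_top (by omega), ih]
    have p1 : gaussBinom (a + c + 3) (a + 2)
        = gaussBinom (a + c + 2) (a + 2) + RatFunc.X ^ (c + 1) * gaussBinom (a + c + 2) (a + 1) := by
      have := gaussBinom_pascal (a + c + 2) (a + 1) (by omega)
      rw [show a + c + 2 - (a + 1) = c + 1 by omega] at this
      convert this using 3
    have p2 : gaussBinom (a + c + 2) (a + 2)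
        = gaussBinom (a + c + 1) (a + 2) + RatFunc.X ^ c * gaussBinom (a + c + 1) (a + 1) := by
      have := gaussBinom_pascal (a + c + 1) (a + 1) (by omega)
      rw [show a + c + 1 - (a + 1) = c by omega] at this
      convert this using 3
    have p3 : gaussBinom (a + c + 2) (a + 1)
        = gaussBinom (a + c + 1) (a + 1) + RatFunc.X ^ (c + 1) * gaussBinom (a + c + 1) a := by
      have := gaussBinom_pascal (a + c + 1) a (by omega)
      rw [show a + c + 1 - a = c + 1 by omega] at this
      convert this using 3
    rw [show a + c + 1 + 2 = a + c + 3 from rfl, p1, p3, p2]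
    ring
end

section
/- For n ≥ 2k ≥ 2, the generating function by major index of standard Young tableaux of shape (n-k,k) with exactly one descent equals q^k + q^{k+1} + ... + q^{n-k}. -/
open Finset Polynomial
open scoped Classical

/-- A standard Young tableau of two-rowed shape `(n-b, b)` is encoded by the set `S`
of entries of its second row: `S ⊆ {1,…,n}`, `|S| = b`, and for every `m` at most
half of `{1,…,m}` lies in `S` (the ballot condition, which makes columns increase). -/
noncomputable def sytSet (n b : ℕ) : Finset (Finset ℕ) :=
  (Finset.Icc 1 n).powerset.filter
    (fun S => S.card = b ∧ ∀ m ∈ Finset.Icc 1 n, 2 * (S ∩ Finset.Icc 1 m).card ≤ m)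

/-- The descent set of a two-rowed SYT with second row `S`: those `i` with `i+1`
in the second row and `i` in the first row (i.e. `i+1` strictly lower than `i`). -/
def tabDes (n : ℕ) (S : Finset ℕ) : Finset ℕ :=
  (Finset.Icc 1 n).filter (fun i => i + 1 ∈ S ∧ i ∉ S)

/-- The major index of a two-rowed SYT: the sum of its descents. -/
def tabMaj (n : ℕ) (S : Finset ℕ) : ℕ := (tabDes n S).sum id

/-- `sytMajGF a b i` is the generating function `∑ q^{maj T}` over standard Young
tableaux `T` of shape `(a, b)` with exactly `i` descents. -/
noncomputable def sytMajGF (a b i : ℕ) : Polynomial ℚ :=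
  (((sytSet (a + b) b).filter (fun S => (tabDes (a + b) S).card = i)).sum
    (fun S => Polynomial.X ^ (tabMaj (a + b) S)))

lemma tabDes_Icc (n j k : ℕ) (hk : 1 ≤ k) (hj : k ≤ j) (hjn : j + k ≤ n) :
    tabDes n (Finset.Icc (j+1) (j+k)) = {j} := by
  ext i
  simp only [tabDes, Finset.mem_filter, Finset.mem_Icc, Finset.mem_singleton]
  omega

lemma Icc_mem_sytSet (n j k : ℕ) (hk : 1 ≤ k) (hj : k ≤ j) (hjn : j + k ≤ n) :
    Finset.Icc (j+1) (j+k) ∈ sytSet n k := by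
  simp only [sytSet, Finset.mem_filter, Finset.mem_powerset]
  refine ⟨?_, ?_, ?_⟩
  · intro x hx
    simp only [Finset.mem_Icc] at hx ⊢
    omega
  · rw [Nat.card_Icc]; omega
  · intro m hm
    simp only [Finset.mem_Icc] at hm
    have heq : Finset.Icc (j+1) (j+k) ∩ Finset.Icc 1 m = Finset.Icc (j+1) (min (j+k) m) := by
      ext x
      simp only [Finset.mem_inter, Finset.mem_Icc, le_min_iff, min_le_iff]
      omega
    rw [heq, Nat.card_Icc]
    omega

lemma sytSet_char (n k : ℕ) (hk : 1 ≤ k) (hn : 2 * k ≤ n) (S : Finset ℕ)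
    (hS : S ∈ sytSet n k) (hd : (tabDes n S).card = 1) :
    ∃ j, k ≤ j ∧ j ≤ n - k ∧ S = Finset.Icc (j+1) (j+k) := by
  simp only [sytSet, Finset.mem_filter, Finset.mem_powerset] at hS
  obtain ⟨hSub, hcard, hbal⟩ := hS
  obtain ⟨d, hdeq⟩ := Finset.card_eq_one.mp hd
  have h1 : (1:ℕ) ∉ S := by
    intro h1
    have hb := hbal 1 (by simp only [Finset.mem_Icc]; omega)
    have hmem : (1:ℕ) ∈ S ∩ Finset.Icc 1 1 := by
      simp [h1]
    have := Finset.card_pos.mpr ⟨1, hmem⟩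
    omega
  have key : ∀ s ∈ S, d < s ∧ Finset.Icc (d+1) s ⊆ S := by
    intro s
    induction s using Nat.strong_induction_on with
    | _ s ih =>
      intro hs
      have hsn : 1 ≤ s ∧ s ≤ n := by
        have := hSub hs; simpa only [Finset.mem_Icc] using this
      have hs2 : 2 ≤ s := by
        rcases Nat.eq_or_lt_of_le hsn.1 with h | h
        · exact absurd (h ▸ hs) h1
        · omega
      by_cases hp : s - 1 ∈ S
      · obtain ⟨hdlt, hsub⟩ := ih (s-1) (by omega) hp
        refine ⟨by omega, ?_⟩
        intro x hx
        simp only [Finset.mem_Icc] at hx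
        rcases Nat.eq_or_lt_of_le hx.2 with h | h
        · exact h ▸ hs
        · exact hsub (by simp only [Finset.mem_Icc]; omega)
      · have hdes : s - 1 ∈ tabDes n S := by
          simp only [tabDes, Finset.mem_filter, Finset.mem_Icc]
          refine ⟨⟨by omega, by omega⟩, ?_, hp⟩
          have h : s - 1 + 1 = s := by omega
          rw [h]; exact hs
        rw [hdeq, Finset.mem_singleton] at hdes
        refine ⟨by omega, ?_⟩
        intro x hx
        simp only [Finset.mem_Icc] at hx
        have : x = s := by omega
        exact this ▸ hs
  have hd1 : d + 1 ∈ S := by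
    have : d ∈ tabDes n S := by rw [hdeq]; exact Finset.mem_singleton_self d
    simp only [tabDes, Finset.mem_filter] at this
    exact this.2.1
  have hSsub : S ⊆ Finset.Icc (d+1) (d+k) := by
    intro s hs
    obtain ⟨hlt, hsub⟩ := key s hs
    have hc : (Finset.Icc (d+1) s).card ≤ S.card := Finset.card_le_card hsub
    rw [Nat.card_Icc, hcard] at hc
    simp only [Finset.mem_Icc]
    omega
  have hScard : (Finset.Icc (d+1) (d+k)).card ≤ S.card := by
    rw [Nat.card_Icc, hcard]; omega
  have hSeq : S = Finset.Icc (d+1) (d+k) := Finset.eq_of_subset_of_card_le hSsub hScard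
  have hdkn : d + k ≤ n := by
    have : d + k ∈ S := by rw [hSeq]; simp only [Finset.mem_Icc]; omega
    have := hSub this
    simp only [Finset.mem_Icc] at this
    omega
  have hkd : k ≤ d := by
    have hb := hbal (d+k) (by simp only [Finset.mem_Icc]; omega)
    have : S ∩ Finset.Icc 1 (d+k) = S := by
      apply Finset.inter_eq_left.mpr
      intro x hx
      have h1x := hSub hx
      have h2x := hSsub hx
      simp only [Finset.mem_Icc] at h1x h2x ⊢
      omega
    rw [this, hcard] at hb
    omega
  exact ⟨d, hkd, by omega, hSeq⟩

/-- Base case: the generating function for the major index of standard Young tableaux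
of shape `(n-k, k)` with exactly one descent is `q^k + q^{k+1} + ⋯ + q^{n-k}`. -/
theorem sytMajGF_one_descent (n k : ℕ) (hk : 1 ≤ k) (hn : 2 * k ≤ n) :
    sytMajGF (n - k) k 1 = ∑ j ∈ Finset.Icc k (n - k), Polynomial.X ^ j := by
  have hkn : k ≤ n := by omega
  have hnk : n - k + k = n := by omega
  unfold sytMajGF
  rw [hnk]
  have himg : ((sytSet n k).filter (fun S => (tabDes n S).card = 1))
      = (Finset.Icc k (n-k)).image (fun j => Finset.Icc (j+1) (j+k)) := by
    ext S
    simp only [Finset.mem_filter, Finset.mem_image, Finset.mem_Icc]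
    constructor
    · rintro ⟨h1, h2⟩
      obtain ⟨j, hj1, hj2, hj3⟩ := sytSet_char n k hk hn S h1 h2
      exact ⟨j, ⟨hj1, hj2⟩, hj3.symm⟩
    · rintro ⟨j, ⟨hj1, hj2⟩, rfl⟩
      refine ⟨Icc_mem_sytSet n j k hk hj1 (by omega), ?_⟩
      rw [tabDes_Icc n j k hk hj1 (by omega)]
      simp
  rw [himg, Finset.sum_image]
  · apply Finset.sum_congr rfl
    intro j hj
    simp only [Finset.mem_Icc] at hj
    rw [tabMaj, tabDes_Icc n j k hk hj.1 (by omega)]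
    simp
  · intro a ha b hb hab
    simp only [Finset.mem_coe, Finset.mem_Icc] at ha hb
    beta_reduce at hab
    have h1 : a + 1 ∈ Finset.Icc (b+1) (b+k) := by
      rw [← hab]; simp only [Finset.mem_Icc]; omega
    have h2 : b + 1 ∈ Finset.Icc (a+1) (a+k) := by
      rw [hab]; simp only [Finset.mem_Icc]; omega
    simp only [Finset.mem_Icc] at h1 h2
    omega
end

section
/- For n ≥ 2k ≥ 2 and i > 1, the generating function f_{(n-k,k),i}(q) of the major index over standard Young tableaux of shape (n-k,k) with exactly i descents satisfies the recurrence f_{(n-k,k),i}(q) = f_{(n-k-1,k),i}(q) + sum over k₀ from i-1 to k-1 of q^{n-k+k₀} f_{(n-k-1,k₀),i-1}(q), where f_{(k-1,k),i}(q) is interpreted as 0. -/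
open Finset Polynomial
open scoped Classical

lemma mem_sytSet {n b : ℕ} {S : Finset ℕ} :
    S ∈ sytSet n b ↔ S ⊆ Finset.Icc 1 n ∧ S.card = b ∧
      ∀ m ∈ Finset.Icc 1 n, 2 * (S ∩ Finset.Icc 1 m).card ≤ m := by
  simp [sytSet, and_assoc]

lemma tabDes_mono {m n : ℕ} {S : Finset ℕ} (hS : S ⊆ Finset.Icc 1 m) (hmn : m ≤ n) :
    tabDes n S = tabDes m S := by
  ext j
  simp only [tabDes, Finset.mem_filter, Finset.mem_Icc]
  constructor
  · rintro ⟨⟨h1, h2⟩, hj1, hj0⟩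
    have := hS hj1
    simp only [Finset.mem_Icc] at this
    exact ⟨⟨h1, by omega⟩, hj1, hj0⟩
  · rintro ⟨⟨h1, h2⟩, hj1, hj0⟩
    exact ⟨⟨h1, by omega⟩, hj1, hj0⟩

lemma tabDes_card_le (n : ℕ) (S : Finset ℕ) : (tabDes n S).card ≤ S.card := by
  apply Finset.card_le_card_of_injOn (fun i => i + 1)
  · intro j hj
    simp only [tabDes, Finset.mem_coe, Finset.mem_filter] at hj
    exact hj.2.1
  · intro a _ b _ h
    simpa using h

lemma decomp {n d : ℕ} {S : Finset ℕ} (hS : S ⊆ Finset.Icc 1 n) (hdS : d ∉ S)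
    (hall : ∀ j, d < j → j ≤ n → j ∈ S) :
    S = (S ∩ Finset.Icc 1 (d-1)) ∪ Finset.Icc (d+1) n := by
  ext j
  simp only [Finset.mem_union, Finset.mem_inter, Finset.mem_Icc]
  constructor
  · intro hj
    have hj' := hS hj
    simp only [Finset.mem_Icc] at hj'
    by_cases h : j ≤ d - 1
    · exact Or.inl ⟨hj, hj'.1, h⟩
    · refine Or.inr ⟨?_, hj'.2⟩
      have : j ≠ d := fun h' => hdS (h' ▸ hj)
      omega
  · rintro (⟨hj, _⟩ | ⟨h1, h2⟩)
    · exact hj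
    · exact hall j h1 h2

lemma tabDes_insert {n d : ℕ} {S : Finset ℕ} (hS : S ⊆ Finset.Icc 1 n)
    (hd1 : 1 ≤ d) (hdn : d < n) (hdS : d ∉ S)
    (hall : ∀ j, d < j → j ≤ n → j ∈ S) :
    tabDes n S = insert d (tabDes (d-1) (S ∩ Finset.Icc 1 (d-1))) := by
  ext j
  simp only [tabDes, Finset.mem_insert, Finset.mem_filter, Finset.mem_inter, Finset.mem_Icc]
  constructor
  · rintro ⟨⟨h1, h2⟩, hj1, hj0⟩
    by_cases hjd : j = d
    · exact Or.inl hjd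
    right
    have hjled : j < d := by
      by_contra h
      push_neg at h
      exact hj0 (hall j (by omega) h2)
    have hne : j + 1 ≠ d := fun h => hdS (h ▸ hj1)
    refine ⟨⟨h1, by omega⟩, ⟨hj1, by omega, by omega⟩, ?_⟩
    rintro ⟨hjS, -⟩
    exact hj0 hjS
  · rintro (rfl | hmem2)
    · exact ⟨⟨hd1, by omega⟩, hall (j+1) (by omega) (by omega), hdS⟩
    · obtain ⟨⟨h1, h2⟩, ⟨hj1, -, -⟩, hj0⟩ := hmem2
      exact ⟨⟨h1, by omega⟩, hj1, fun h => hj0 ⟨h, h1, h2⟩⟩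

/-- the largest element of `[0,n]` not in `S` -/
def dM (n : ℕ) (S : Finset ℕ) : ℕ := ((Finset.Icc 0 n) \ S).sup id

lemma dM_spec {n k : ℕ} {S : Finset ℕ} (hmem : S ∈ sytSet n k) (hk : 1 ≤ k)
    (hn : 2 * k ≤ n) (hnS : n ∈ S) :
    1 ≤ dM n S ∧ dM n S < n ∧ dM n S ∉ S ∧ ∀ j, dM n S < j → j ≤ n → j ∈ S := by
  obtain ⟨hSub, hcard, hbal⟩ := mem_sytSet.mp hmem
  have h1 : (1:ℕ) ∉ S := by
    have := hbal 1 (by simp; omega)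
    intro h
    have : 1 ∈ S ∩ Finset.Icc 1 1 := by simp [h]
    have hc := Finset.card_pos.mpr ⟨1, this⟩
    omega
  have h1mem : (1:ℕ) ∈ (Finset.Icc 0 n) \ S := by
    simp [h1]; omega
  have hd1 : 1 ≤ dM n S := Finset.le_sup (f := id) h1mem
  obtain ⟨b, hb, hbe⟩ := Finset.exists_mem_eq_sup _ ⟨1, h1mem⟩ (id : ℕ → ℕ)
  simp only [Finset.mem_sdiff, Finset.mem_Icc] at hb
  have hdSmem : dM n S ∉ S := by rw [dM, hbe]; exact hb.2
  have hdn : dM n S < n := by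
    have : dM n S ≤ n := by rw [dM, hbe]; exact hb.1.2
    rcases eq_or_lt_of_le this with h | h
    · rw [h] at hdSmem; exact absurd hnS hdSmem
    · exact h
  refine ⟨hd1, hdn, hdSmem, fun j hj1 hj2 => ?_⟩
  by_contra hjS
  have : j ∈ (Finset.Icc 0 n) \ S := by simp [hjS]; omega
  have := Finset.le_sup (f := id) this
  simp only [id] at this
  rw [dM] at hj1
  omega

lemma dM_eq {n d : ℕ} {S : Finset ℕ} (hdn : d ≤ n) (hdS : d ∉ S)
    (hall : ∀ j, d < j → j ≤ n → j ∈ S) : dM n S = d := by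
  apply le_antisymm
  · apply Finset.sup_le
    intro x hx
    simp only [Finset.mem_sdiff, Finset.mem_Icc] at hx
    simp only [id_eq]
    by_contra h
    exact hx.2 (hall x (by omega) hx.1.2)
  · exact Finset.le_sup (f := id) (by simp [hdS, hdn])

lemma inter_Icc_eq {d m : ℕ} (S : Finset ℕ) (hm : m ≤ d - 1) :
    (S ∩ Finset.Icc 1 (d-1)) ∩ Finset.Icc 1 m = S ∩ Finset.Icc 1 m := by
  ext j
  simp only [Finset.mem_inter, Finset.mem_Icc]
  constructor
  · rintro ⟨⟨h1, -⟩, h2⟩; exact ⟨h1, h2⟩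
  · rintro ⟨h1, h2, h3⟩; exact ⟨⟨h1, h2, by omega⟩, h2, h3⟩

lemma bridge {n d : ℕ} {S : Finset ℕ} (hS : S ⊆ Finset.Icc 1 n)
    (hd1 : 1 ≤ d) (hdn : d < n) (hdS : d ∉ S)
    (hall : ∀ j, d < j → j ≤ n → j ∈ S) :
    (tabDes n S).card = (tabDes (d-1) (S ∩ Finset.Icc 1 (d-1))).card + 1 ∧
    tabMaj n S = d + tabMaj (d-1) (S ∩ Finset.Icc 1 (d-1)) ∧
    S.card = (S ∩ Finset.Icc 1 (d-1)).card + (n - d) := by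
  have hins := tabDes_insert hS hd1 hdn hdS hall
  have hdnot : d ∉ tabDes (d-1) (S ∩ Finset.Icc 1 (d-1)) := by
    intro h
    simp only [tabDes, Finset.mem_filter, Finset.mem_Icc] at h
    omega
  refine ⟨?_, ?_, ?_⟩
  · rw [hins, Finset.card_insert_of_notMem hdnot]
  · rw [tabMaj, hins, Finset.sum_insert hdnot]; rfl
  · conv_lhs => rw [decomp hS hdS hall]
    rw [Finset.card_union_of_disjoint, Nat.card_Icc]
    · omega
    · rw [Finset.disjoint_left]
      intro x hx hx'
      simp only [Finset.mem_inter, Finset.mem_Icc] at hx hx'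
      omega

lemma forward_main {n k i : ℕ} (hk : 1 ≤ k) (hn : 2*k ≤ n) {S : Finset ℕ}
    (hmem : S ∈ sytSet n k) (hdes : (tabDes n S).card = i) (hnS : n ∈ S) :
    (S ∩ Finset.Icc 1 (dM n S - 1)).card + (n - dM n S) = k ∧ 1 ≤ dM n S ∧ dM n S < n ∧
    (S ∩ Finset.Icc 1 (dM n S - 1)) ∈
      sytSet (dM n S - 1) (S ∩ Finset.Icc 1 (dM n S - 1)).card ∧
    (tabDes (dM n S - 1) (S ∩ Finset.Icc 1 (dM n S - 1))).card + 1 = i ∧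
    tabMaj n S = dM n S + tabMaj (dM n S - 1) (S ∩ Finset.Icc 1 (dM n S - 1)) ∧
    S = (S ∩ Finset.Icc 1 (dM n S - 1)) ∪ Finset.Icc (dM n S + 1) n := by
  obtain ⟨hSub, hcard, hbal⟩ := mem_sytSet.mp hmem
  obtain ⟨hd1, hdn, hdS, hall⟩ := dM_spec hmem hk hn hnS
  obtain ⟨hc1, hc2, hc3⟩ := bridge hSub hd1 hdn hdS hall
  refine ⟨by omega, hd1, hdn, ?_, by omega, hc2, decomp hSub hdS hall⟩
  rw [mem_sytSet]
  refine ⟨Finset.inter_subset_right, rfl, ?_⟩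
  intro m hm
  simp only [Finset.mem_Icc] at hm
  rw [inter_Icc_eq S hm.2]
  exact hbal m (by simp only [Finset.mem_Icc]; omega)

lemma backward_main {n k i k₀ : ℕ} (hk₀ : k₀ + 1 ≤ k) (hn : 2*k ≤ n) (hi : 1 ≤ i)
    {S' : Finset ℕ} (hmem : S' ∈ sytSet (n - k + k₀ - 1) k₀)
    (hdes' : (tabDes (n - k + k₀ - 1) S').card = i - 1) :
    (S' ∪ Finset.Icc (n - k + k₀ + 1) n) ∈ sytSet n k ∧
    n ∈ S' ∪ Finset.Icc (n - k + k₀ + 1) n ∧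
    (tabDes n (S' ∪ Finset.Icc (n - k + k₀ + 1) n)).card = i ∧
    dM n (S' ∪ Finset.Icc (n - k + k₀ + 1) n) = n - k + k₀ ∧
    (S' ∪ Finset.Icc (n - k + k₀ + 1) n) ∩ Finset.Icc 1 (n - k + k₀ - 1) = S' ∧
    tabMaj n (S' ∪ Finset.Icc (n - k + k₀ + 1) n)
      = (n - k + k₀) + tabMaj (n - k + k₀ - 1) S' := by
  set d := n - k + k₀ with hd
  set S := S' ∪ Finset.Icc (d + 1) n with hSdef
  obtain ⟨hSub', hcard', hbal'⟩ := mem_sytSet.mp hmem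
  have hd1 : 1 ≤ d := by omega
  have hdn : d < n := by omega
  have hS'le : ∀ j ∈ S', 1 ≤ j ∧ j ≤ d - 1 := by
    intro j hj
    have := hSub' hj
    simp only [Finset.mem_Icc] at this
    exact this
  have hdS : d ∉ S := by
    intro h
    rw [hSdef, Finset.mem_union] at h
    rcases h with h | h
    · have := hS'le d h; omega
    · simp only [Finset.mem_Icc] at h; omega
  have hall : ∀ j, d < j → j ≤ n → j ∈ S := by
    intro j h1 h2
    rw [hSdef, Finset.mem_union]
    right
    simp only [Finset.mem_Icc]; omega
  have hSsub : S ⊆ Finset.Icc 1 n := by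
    intro j hj
    rw [hSdef, Finset.mem_union] at hj
    simp only [Finset.mem_Icc]
    rcases hj with h | h
    · have := hS'le j h; omega
    · simp only [Finset.mem_Icc] at h; omega
  have hSint : S ∩ Finset.Icc 1 (d-1) = S' := by
    ext j
    simp only [hSdef, Finset.mem_inter, Finset.mem_union, Finset.mem_Icc]
    constructor
    · rintro ⟨hj | ⟨ha, hb⟩, h1, h2⟩
      · exact hj
      · omega
    · intro hj
      have := hS'le j hj
      exact ⟨Or.inl hj, by omega⟩
  obtain ⟨hc1, hc2, hc3⟩ := bridge hSsub hd1 hdn hdS hall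
  rw [hSint] at hc1 hc2 hc3
  have hScard : S.card = k := by omega
  have hnS : n ∈ S := hall n hdn le_rfl
  refine ⟨?_, hnS, by omega, dM_eq (le_of_lt hdn) hdS hall, hSint, hc2⟩
  rw [mem_sytSet]
  refine ⟨hSsub, hScard, ?_⟩
  intro m hm
  simp only [Finset.mem_Icc] at hm
  by_cases hmd : m ≤ d - 1
  · have hsm : S ∩ Finset.Icc 1 m = S' ∩ Finset.Icc 1 m := by
      ext j
      simp only [hSdef, Finset.mem_inter, Finset.mem_union, Finset.mem_Icc]
      constructor
      · rintro ⟨hj | ⟨ha, hb⟩, h1, h2⟩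
        · exact ⟨hj, h1, h2⟩
        · omega
      · rintro ⟨hj, h1, h2⟩
        exact ⟨Or.inl hj, h1, h2⟩
    rw [hsm]
    exact hbal' m (by simp only [Finset.mem_Icc]; omega)
  · have hm' : S ∩ Finset.Icc 1 m = S' ∪ Finset.Icc (d+1) m := by
      ext j
      simp only [hSdef, Finset.mem_inter, Finset.mem_union, Finset.mem_Icc]
      constructor
      · rintro ⟨hj | ⟨ha, hb⟩, h1, h2⟩
        · exact Or.inl hj
        · exact Or.inr ⟨ha, h2⟩
      · rintro (hj | ⟨ha, hb⟩)
        · have := hS'le j hj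
          exact ⟨Or.inl hj, by omega⟩
        · exact ⟨Or.inr ⟨ha, by omega⟩, by omega⟩
    rw [hm', Finset.card_union_of_disjoint, Nat.card_Icc]
    · omega
    · rw [Finset.disjoint_left]
      intro x hx hx'
      have := hS'le x hx
      simp only [Finset.mem_Icc] at hx'
      omega

/-- The recurrence for the major-index generating function of two-rowed standard Young
tableaux of shape `(n-k, k)` with exactly `i > 1` descents.  (When `n = 2k` the term
`sytMajGF (n-k-1) k i` corresponds to the non-shape `(k-1,k)` and vanishes.) -/
theorem sytMajGF_recurrence (n k i : ℕ) (hk : 1 ≤ k) (hn : 2 * k ≤ n) (hi : 1 < i) :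
    sytMajGF (n - k) k i =
      sytMajGF (n - k - 1) k i +
        ∑ k₀ ∈ Finset.Icc (i - 1) (k - 1),
          Polynomial.X ^ (n - k + k₀) * sytMajGF (n - k - 1) k₀ (i - 1) := by
  classical
  have hkn : k ≤ n := by omega
  have h1 : n - k + k = n := by omega
  have h2 : n - k - 1 + k = n - 1 := by omega
  set F : Finset (Finset ℕ) := (sytSet n k).filter (fun S => (tabDes n S).card = i) with hF
  have hLHS : sytMajGF (n - k) k i = ∑ S ∈ F, (X : Polynomial ℚ) ^ tabMaj n S := by
    unfold sytMajGF
    rw [h1, hF]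
  -- Part A : tableaux not containing n
  have hA : ∑ S ∈ F.filter (fun S => n ∉ S), (X : Polynomial ℚ) ^ tabMaj n S
      = sytMajGF (n - k - 1) k i := by
    unfold sytMajGF
    rw [h2]
    apply Finset.sum_congr
    · ext S
      simp only [hF, Finset.filter_filter, Finset.mem_filter, mem_sytSet, and_assoc]
      constructor
      · rintro ⟨hsub, hcard, hbal, hdes, hnS⟩
        have hsub' : S ⊆ Finset.Icc 1 (n - 1) := by
          intro j hj
          have hj' := hsub hj
          simp only [Finset.mem_Icc] at hj' ⊢
          have hjn : j ≠ n := fun h => hnS (h ▸ hj)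
          omega
        refine ⟨hsub', hcard, ?_, ?_⟩
        · intro m hm
          simp only [Finset.mem_Icc] at hm
          exact hbal m (by simp only [Finset.mem_Icc]; omega)
        · rw [tabDes_mono hsub' (by omega)] at hdes
          exact hdes
      · rintro ⟨hsub', hcard, hbal, hdes⟩
        have hsub : S ⊆ Finset.Icc 1 n :=
          hsub'.trans (Finset.Icc_subset_Icc_right (by omega))
        have hnS : n ∉ S := by
          intro h
          have := hsub' h
          simp only [Finset.mem_Icc] at this
          omega
        refine ⟨hsub, hcard, ?_, ?_, hnS⟩
        · intro m hm
          simp only [Finset.mem_Icc] at hm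
          by_cases hmn : m ≤ n - 1
          · exact hbal m (by simp only [Finset.mem_Icc]; omega)
          · have hmeq : m = n := by omega
            have : S ∩ Finset.Icc 1 m = S := Finset.inter_eq_left.mpr (hmeq ▸ hsub)
            rw [this, hcard]
            omega
        · rw [tabDes_mono hsub' (by omega)]
          exact hdes
    · intro S hS
      simp only [Finset.mem_filter, mem_sytSet] at hS
      rw [tabMaj, tabMaj, tabDes_mono hS.1.1 (by omega)]
  -- Part B : tableaux containing n
  have hB : ∑ S ∈ F.filter (fun S => n ∈ S), (X : Polynomial ℚ) ^ tabMaj n S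
      = ∑ k₀ ∈ Finset.Icc (i - 1) (k - 1),
          (X : Polynomial ℚ) ^ (n - k + k₀) * sytMajGF (n - k - 1) k₀ (i - 1) := by
    have hRW : ∀ k₀ ∈ Finset.Icc (i - 1) (k - 1),
        (X : Polynomial ℚ) ^ (n - k + k₀) * sytMajGF (n - k - 1) k₀ (i - 1)
          = ∑ S' ∈ (sytSet (n - k - 1 + k₀) k₀).filter
              (fun S' => (tabDes (n - k - 1 + k₀) S').card = i - 1),
              (X : Polynomial ℚ) ^ (n - k + k₀ + tabMaj (n - k - 1 + k₀) S') := by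
      intro k₀ _
      unfold sytMajGF
      rw [Finset.mul_sum]
      exact Finset.sum_congr rfl (fun S' _ => by rw [← pow_add])
    rw [Finset.sum_congr rfl hRW, Finset.sum_sigma']
    apply Finset.sum_nbij'
      (i := fun S => (⟨(S ∩ Finset.Icc 1 (dM n S - 1)).card,
          S ∩ Finset.Icc 1 (dM n S - 1)⟩ : Σ _ : ℕ, Finset ℕ))
      (j := fun p => p.2 ∪ Finset.Icc (n - k + p.1 + 1) n)
    -- membership forward
    · intro S hS
      simp only [hF, Finset.filter_filter, Finset.mem_filter] at hS
      obtain ⟨hmem, hdes, hnS⟩ := hS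
      obtain ⟨hcard, hd1, hdn, hmem', hdes', hmaj, hdecomp⟩ := forward_main hk hn hmem hdes hnS
      have hle := tabDes_card_le (dM n S - 1) (S ∩ Finset.Icc 1 (dM n S - 1))
      simp only [Finset.mem_sigma, Finset.mem_Icc, Finset.mem_filter]
      have he : n - k - 1 + (S ∩ Finset.Icc 1 (dM n S - 1)).card = dM n S - 1 := by omega
      rw [he]
      exact ⟨⟨by omega, by omega⟩, hmem', by omega⟩
    -- membership backward
    · intro p hp
      simp only [Finset.mem_sigma, Finset.mem_Icc, Finset.mem_filter] at hp
      obtain ⟨⟨hk1, hk2⟩, hmem, hdes⟩ := hp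
      have he : n - k - 1 + p.1 = n - k + p.1 - 1 := by omega
      rw [he] at hmem hdes
      obtain ⟨hmem2, hnS2, hdes2, hdM, hint, hmaj2⟩ :=
        backward_main (k₀ := p.1) (by omega) hn (by omega) hmem hdes
      simp only [hF, Finset.filter_filter, Finset.mem_filter]
      exact ⟨hmem2, hdes2, hnS2⟩
    -- left inverse
    · intro S hS
      simp only [hF, Finset.filter_filter, Finset.mem_filter] at hS
      obtain ⟨hmem, hdes, hnS⟩ := hS
      obtain ⟨hcard, hd1, hdn, hmem', hdes', hmaj, hdecomp⟩ := forward_main hk hn hmem hdes hnS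
      have he : n - k + (S ∩ Finset.Icc 1 (dM n S - 1)).card + 1 = dM n S + 1 := by omega
      rw [he]
      exact hdecomp.symm
    -- right inverse
    · intro p hp
      obtain ⟨k₀, S'⟩ := p
      simp only [Finset.mem_sigma, Finset.mem_Icc, Finset.mem_filter] at hp
      obtain ⟨⟨hk1, hk2⟩, hmem, hdes⟩ := hp
      have he : n - k - 1 + k₀ = n - k + k₀ - 1 := by omega
      rw [he] at hmem hdes
      obtain ⟨hmem2, hnS2, hdes2, hdM, hint, hmaj2⟩ :=
        backward_main (k₀ := k₀) (by omega) hn (by omega) hmem hdes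
      have hthis : (S' ∪ Finset.Icc (n - k + k₀ + 1) n) ∩
          Finset.Icc 1 (dM n (S' ∪ Finset.Icc (n - k + k₀ + 1) n) - 1) = S' := by
        rw [hdM]
        exact hint
      obtain ⟨-, hcard2, -⟩ := mem_sytSet.mp hmem
      simp only [hthis, hcard2]
    -- values
    · intro S hS
      simp only [hF, Finset.filter_filter, Finset.mem_filter] at hS
      obtain ⟨hmem, hdes, hnS⟩ := hS
      obtain ⟨hcard, hd1, hdn, hmem', hdes', hmaj, hdecomp⟩ := forward_main hk hn hmem hdes hnS
      have he : n - k - 1 + (S ∩ Finset.Icc 1 (dM n S - 1)).card = dM n S - 1 := by omega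
      have he2 : n - k + (S ∩ Finset.Icc 1 (dM n S - 1)).card = dM n S := by omega
      rw [he, he2, hmaj]
  -- assemble
  rw [hLHS, ← Finset.sum_filter_add_sum_filter_not F (fun S => n ∈ S), hA, hB, add_comm]
end

section
/- The number of standard Young tableaux of shape (n-k,k) (two rows of lengths n-k ≥ k) equals C(n,k)·(n-2k+1)/(n-k+1), where C(n,k) is the binomial coefficient. -/
open Finset Polynomial
open scoped Classical

lemma sytSet_zero (n : ℕ) : sytSet n 0 = {∅} := by
  ext S
  simp only [mem_sytSet, Finset.card_eq_zero, Finset.mem_singleton]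
  constructor
  · rintro ⟨-, h, -⟩; exact h
  · rintro rfl
    refine ⟨Finset.empty_subset _, rfl, ?_⟩
    intro m hm
    simp

lemma sytSet_eq_empty {n b : ℕ} (hn : 1 ≤ n) (hb : n < 2 * b) : sytSet n b = ∅ := by
  ext S
  simp only [mem_sytSet, Finset.notMem_empty, iff_false]
  rintro ⟨hsub, hcard, hcond⟩
  have h1 : n ∈ Finset.Icc 1 n := by simp [hn]
  have h2 := hcond n h1
  rw [Finset.inter_eq_left.mpr hsub, hcard] at h2
  omega

lemma inter_Icc_erase (S : Finset ℕ) (a m : ℕ) (hm : m < a) :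
    (S.erase a) ∩ Finset.Icc 1 m = S ∩ Finset.Icc 1 m := by
  ext x
  simp only [Finset.mem_inter, Finset.mem_erase, Finset.mem_Icc]
  constructor
  · rintro ⟨⟨-, h⟩, h2⟩; exact ⟨h, h2⟩
  · rintro ⟨h, h2⟩; exact ⟨⟨by omega, h⟩, h2⟩

lemma inter_Icc_insert (S : Finset ℕ) (a m : ℕ) (hm : m < a) :
    (insert a S) ∩ Finset.Icc 1 m = S ∩ Finset.Icc 1 m := by
  ext x
  simp only [Finset.mem_inter, Finset.mem_insert, Finset.mem_Icc]
  constructor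
  · rintro ⟨h | h, h2⟩
    · omega
    · exact ⟨h, h2⟩
  · rintro ⟨h, h2⟩; exact ⟨Or.inr h, h2⟩

lemma sytSet_card_rec (n b : ℕ) (hb : 2 * (b + 1) ≤ n + 1) :
    (sytSet (n + 1) (b + 1)).card =
      (sytSet n (b + 1)).card + (sytSet n b).card := by
  classical
  rw [← Finset.card_filter_add_card_filter_not
    (s := sytSet (n+1) (b+1)) (p := fun S => (n+1) ∉ S)]
  congr 1
  · -- sets not containing n+1
    have hset : (sytSet (n+1) (b+1)).filter (fun S => (n+1) ∉ S) = sytSet n (b+1) := by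
      ext S
      simp only [Finset.mem_filter, mem_sytSet]
      constructor
      · rintro ⟨⟨hsub, hcard, hcond⟩, hnot⟩
        refine ⟨?_, hcard, ?_⟩
        · intro x hx
          have hx1 := hsub hx
          simp only [Finset.mem_Icc] at hx1 ⊢
          have : x ≠ n + 1 := fun he => hnot (he ▸ hx)
          omega
        · intro m hm
          refine hcond m ?_
          simp only [Finset.mem_Icc] at hm ⊢
          omega
      · rintro ⟨hsub, hcard, hcond⟩
        have hn1 : n + 1 ∉ S := fun hx => by
          have := hsub hx; simp only [Finset.mem_Icc] at this; omega
        refine ⟨⟨?_, hcard, ?_⟩, hn1⟩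
        · intro x hx
          have := hsub hx; simp only [Finset.mem_Icc] at this ⊢; omega
        · intro m hm
          simp only [Finset.mem_Icc] at hm
          rcases Nat.lt_or_ge m (n+1) with hlt | hge
          · exact hcond m (by simp only [Finset.mem_Icc]; omega)
          · have hm1 : m = n + 1 := by omega
            subst hm1
            have hSS : S ∩ Finset.Icc 1 (n+1) = S := Finset.inter_eq_left.mpr
              (hsub.trans (Finset.Icc_subset_Icc_right (by omega)))
            rw [hSS, hcard]; omega
    rw [hset]
  · -- sets containing n+1 : bijection with sytSet n b via erase
    apply Finset.card_bij (fun S _ => S.erase (n+1))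
    · -- maps into sytSet n b
      intro S hS
      simp only [Finset.mem_filter, mem_sytSet, not_not] at hS
      obtain ⟨⟨hsub, hcard, hcond⟩, hmem⟩ := hS
      rw [mem_sytSet]
      refine ⟨?_, ?_, ?_⟩
      · intro x hx
        simp only [Finset.mem_erase] at hx
        have := hsub hx.2
        simp only [Finset.mem_Icc] at this ⊢
        have := hx.1
        omega
      · rw [Finset.card_erase_of_mem hmem, hcard]; omega
      · intro m hm
        simp only [Finset.mem_Icc] at hm
        rw [inter_Icc_erase S (n+1) m (by omega)]
        exact hcond m (by simp only [Finset.mem_Icc]; omega)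
    · -- injective
      intro S1 h1 S2 h2 he
      simp only [Finset.mem_filter, not_not] at h1 h2
      rw [← Finset.insert_erase h1.2, ← Finset.insert_erase h2.2, he]
    · -- surjective
      intro T hT
      rw [mem_sytSet] at hT
      obtain ⟨hsub, hcard, hcond⟩ := hT
      have hnotin : n + 1 ∉ T := fun hx => by
        have := hsub hx; simp only [Finset.mem_Icc] at this; omega
      refine ⟨insert (n+1) T, ?_, ?_⟩
      · simp only [Finset.mem_filter, mem_sytSet, not_not]
        refine ⟨⟨?_, ?_, ?_⟩, Finset.mem_insert_self _ _⟩
        · intro x hx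
          simp only [Finset.mem_insert] at hx
          rcases hx with rfl | hx
          · simp only [Finset.mem_Icc]; omega
          · have := hsub hx; simp only [Finset.mem_Icc] at this ⊢; omega
        · rw [Finset.card_insert_of_notMem hnotin, hcard]
        · intro m hm
          simp only [Finset.mem_Icc] at hm
          rcases Nat.lt_or_ge m (n+1) with hlt | hge
          · rw [inter_Icc_insert T (n+1) m (by omega)]
            exact hcond m (by simp only [Finset.mem_Icc]; omega)
          · have hm1 : m = n + 1 := by omega
            subst hm1
            have hins : (insert (n+1) T) ∩ Finset.Icc 1 (n+1) = insert (n+1) T := by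
              apply Finset.inter_eq_left.mpr
              intro x hx
              simp only [Finset.mem_insert] at hx
              rcases hx with rfl | hx
              · simp only [Finset.mem_Icc]; omega
              · have := hsub hx; simp only [Finset.mem_Icc] at this ⊢; omega
            rw [hins, Finset.card_insert_of_notMem hnotin, hcard]
            omega
      · exact Finset.erase_insert hnotin

lemma sytSet_card_eq (n : ℕ) : ∀ k : ℕ, 2 * k ≤ n →
    (sytSet n k).card + (if k = 0 then 0 else Nat.choose n (k - 1)) = Nat.choose n k := by
  induction n with
  | zero =>
    intro k hk
    have hk0 : k = 0 := by omega
    subst hk0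
    simp [sytSet_zero]
  | succ n ih =>
    intro k hk
    match k with
    | 0 => simp [sytSet_zero]
    | k + 1 =>
      rw [sytSet_card_rec n k hk]
      simp only [Nat.succ_ne_zero, if_neg, if_false, Nat.add_sub_cancel]
      have pas : (n+1).choose (k+1) = n.choose k + n.choose (k+1) :=
        Nat.choose_succ_succ n k
      have h1 : (n+1).choose k = n.choose k + (if k = 0 then 0 else n.choose (k-1)) := by
        match k with
        | 0 => simp
        | k + 1 =>
          simp only [Nat.succ_ne_zero, if_neg, if_false, Nat.add_sub_cancel]
          rw [Nat.choose_succ_succ]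
          simp only [Nat.succ_eq_add_one]
          omega
      have ihk := ih k (by omega)
      rcases Nat.lt_or_ge n (2 * (k + 1)) with hlt | hge
      · have hn : n = 2 * k + 1 := by omega
        have he : sytSet n (k+1) = ∅ := sytSet_eq_empty (by omega) (by omega)
        have hs : n.choose (k+1) = n.choose k := by
          rw [← Nat.choose_symm (show k + 1 ≤ n by omega)]
          congr 1
          omega
        rw [he]
        simp only [Finset.card_empty, zero_add]
        omega
      · have ihk1 := ih (k+1) hge
        simp only [Nat.succ_ne_zero, if_neg, if_false, Nat.add_sub_cancel] at ihk1
        omega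

/-- The hook-length count for two-rowed shapes: the number of standard Young tableaux of
shape `(n-k, k)` equals `C(n,k)·(n-2k+1)/(n-k+1)` (stated multiplied through by
`n-k+1` to stay in the natural numbers). -/
theorem card_sytSet_two_rows (n k : ℕ) (h : 2 * k ≤ n) :
    (sytSet n k).card * (n - k + 1) = Nat.choose n k * (n - 2 * k + 1) := by
  match k with
  | 0 => simp [sytSet_zero]
  | k + 1 =>
    have key := sytSet_card_eq n (k+1) h
    simp only [Nat.succ_ne_zero, if_neg, if_false, Nat.add_sub_cancel] at key
    have id1 : n.choose (k+1) * (k+1) = n.choose k * (n - k) :=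
      Nat.choose_succ_right_eq n k
    rw [show n - (k+1) + 1 = n - k from by omega,
        show n - 2 * (k+1) + 1 = (n - k) - (k+1) from by omega]
    have h2 : n.choose (k+1) * (n - k) =
        n.choose (k+1) * ((n - k) - (k+1)) + n.choose (k+1) * (k+1) := by
      rw [← Nat.mul_add]
      congr 1
      omega
    have e3 : (sytSet n (k+1)).card * (n - k) + n.choose k * (n - k) =
        n.choose (k+1) * ((n - k) - (k+1)) + n.choose k * (n - k) := by
      rw [← Nat.add_mul, key, h2, id1]
    exact Nat.add_right_cancel e3
end

section
/- For n odd, n = 2m+1, every standard Young tableau of shape (m+1,m) with exactly m descents has major index between m² and m² + m, and for each value M in this range there is exactly one such tableau with major index M. -/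
open Finset Polynomial
open scoped Classical

/-! ### Auxiliary development -/

/-- The canonical tableau with switch point `k`: second row is
`{2, 4, …, 2(m-k), 2(m-k)+3, 2(m-k)+5, …, 2m+1}`. -/
def Tk (m k : ℕ) : Finset ℕ :=
  (Finset.Icc 1 m).image (fun j => if m - k < j then 2*j+1 else 2*j)

lemma Tk_inj (m k : ℕ) : Set.InjOn (fun j => if m - k < j then 2*j+1 else 2*j)
    (Finset.Icc 1 m) := by
  intro a _ b _ h
  simp only at h
  split_ifs at h <;> omega

lemma Tk_card (m k : ℕ) : (Tk m k).card = m := by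
  rw [Tk, Finset.card_image_of_injOn (Tk_inj m k), Nat.card_Icc]
  omega

lemma Tk_bounds (m k : ℕ) : ∀ x ∈ Tk m k, 2 ≤ x ∧ x ≤ 2*m+1 := by
  intro x hx
  rw [Tk, Finset.mem_image] at hx
  obtain ⟨j, hj, rfl⟩ := hx
  simp only [Finset.mem_Icc] at hj
  split_ifs <;> omega

lemma Tk_sub (m k : ℕ) : Tk m k ⊆ Finset.Icc 1 (2*m+1) := by
  intro x hx
  have := Tk_bounds m k x hx
  simp only [Finset.mem_Icc]; omega

lemma Tk_ballot (m k : ℕ) : ∀ x, 2 * ((Tk m k) ∩ Finset.Icc 1 x).card ≤ x := by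
  intro x
  have hsub : (Tk m k) ∩ Finset.Icc 1 x ⊆
      (Finset.Icc 1 (x/2)).image (fun j => if m - k < j then 2*j+1 else 2*j) := by
    intro y hy
    rw [Finset.mem_inter] at hy
    obtain ⟨hy1, hy2⟩ := hy
    rw [Tk, Finset.mem_image] at hy1
    obtain ⟨j, hj, rfl⟩ := hy1
    simp only [Finset.mem_Icc] at hj hy2
    rw [Finset.mem_image]
    refine ⟨j, ?_, rfl⟩
    simp only [Finset.mem_Icc]
    split_ifs at hy2 <;> omega
  have h1 := Finset.card_le_card hsub
  have h2 := Finset.card_image_le (s := Finset.Icc 1 (x/2))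
    (f := fun j => if m - k < j then 2*j+1 else 2*j)
  have h3 : (Finset.Icc 1 (x/2)).card = x/2 := by rw [Nat.card_Icc]; omega
  omega

lemma Tk_des (m k : ℕ) :
    tabDes (2*m+1) (Tk m k) = (Tk m k).image (fun s => s - 1) := by
  ext d
  simp only [tabDes, Finset.mem_filter, Finset.mem_Icc, Finset.mem_image]
  constructor
  · rintro ⟨hd, hd1, hd2⟩
    exact ⟨d+1, hd1, by omega⟩
  · rintro ⟨s, hs, rfl⟩
    have hsb := Tk_bounds m k s hs
    have hs' : s - 1 + 1 = s := by omega
    refine ⟨by omega, by rw [hs']; exact hs, ?_⟩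
    -- s - 1 ∉ Tk m k
    intro hmem
    rw [Tk, Finset.mem_image] at hs hmem
    obtain ⟨j, hj, rfl⟩ := hs
    obtain ⟨j', hj', he⟩ := hmem
    simp only [Finset.mem_Icc] at hj hj'
    split_ifs at he <;> omega

lemma Tk_des_card (m k : ℕ) : (tabDes (2*m+1) (Tk m k)).card = m := by
  rw [Tk_des m k, Finset.card_image_of_injOn, Tk_card]
  intro a ha b hb h
  have h1 := Tk_bounds m k a ha
  have h2 := Tk_bounds m k b hb
  simp only at h
  omega

lemma sum_odd (m : ℕ) : ∑ j ∈ Finset.Icc 1 m, (2*j - 1) = m^2 := by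
  induction m with
  | zero => simp
  | succ n ih =>
    rw [Finset.sum_Icc_succ_top (by omega : 1 ≤ n+1), ih]
    ring_nf
    omega

lemma Tk_sum (m k : ℕ) (hk : k ≤ m) :
    ∑ j ∈ Finset.Icc 1 m, ((if m - k < j then 2*j+1 else 2*j) - 1) = m^2 + k := by
  have h1 : ∀ j ∈ Finset.Icc 1 m, ((if m - k < j then 2*j+1 else 2*j) - 1)
      = (2*j-1) + (if m - k < j then 1 else 0) := by
    intro j hj
    simp only [Finset.mem_Icc] at hj
    split_ifs <;> omega
  rw [Finset.sum_congr rfl h1, Finset.sum_add_distrib, sum_odd]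
  have h2 : (Finset.Icc 1 m).filter (fun j => m - k < j) = Finset.Ioc (m-k) m := by
    ext j
    simp only [Finset.mem_filter, Finset.mem_Icc, Finset.mem_Ioc]
    omega
  rw [Finset.sum_ite, Finset.sum_const, Finset.sum_const, h2, Nat.card_Ioc]
  simp only [smul_eq_mul, mul_one, mul_zero, add_zero]
  omega

lemma Tk_maj (m k : ℕ) (hk : k ≤ m) : tabMaj (2*m+1) (Tk m k) = m^2 + k := by
  have hinj : ∀ x ∈ Tk m k, ∀ y ∈ Tk m k, x - 1 = y - 1 → x = y := by
    intro x hx y hy h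
    have h1 := Tk_bounds m k x hx
    have h2 := Tk_bounds m k y hy
    omega
  rw [tabMaj, Tk_des m k, Finset.sum_image hinj]
  rw [Tk, Finset.sum_image (fun x hx y hy h => Tk_inj m k hx hy h)]
  exact Tk_sum m k hk

lemma mem_sytSet_iff (n b : ℕ) (S : Finset ℕ) :
    S ∈ sytSet n b ↔ S ⊆ Finset.Icc 1 n ∧ S.card = b ∧
      ∀ x ∈ Finset.Icc 1 n, 2 * (S ∩ Finset.Icc 1 x).card ≤ x := by
  simp [sytSet, Finset.mem_filter, Finset.mem_powerset, and_assoc]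

lemma reach_up (A : Finset ℕ) (m : ℕ) (hstep : ∀ j ∈ A, j < m → j + 1 ∈ A) :
    ∀ j', j' ≤ m → ∀ j ∈ A, j ≤ j' → j' ∈ A := by
  intro j'
  induction j' with
  | zero =>
    intro _ j hj hle
    have : j = 0 := by omega
    exact this ▸ hj
  | succ n ih =>
    intro hn j hj hle
    rcases Nat.eq_or_lt_of_le hle with h | h
    · exact h ▸ hj
    · exact hstep n (ih (by omega) j hj (by omega)) (by omega)

lemma upward_closed_eq (m : ℕ) (A : Finset ℕ) (hsub : A ⊆ Finset.Icc 1 m)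
    (hstep : ∀ j ∈ A, j < m → j + 1 ∈ A) : A = Finset.Ioc (m - A.card) m := by
  have hk : A.card ≤ m := by
    have h := Finset.card_le_card hsub
    rw [Nat.card_Icc] at h
    omega
  have hAsub : A ⊆ Finset.Ioc (m - A.card) m := by
    intro j hj
    have hjm : 1 ≤ j ∧ j ≤ m := by
      have := hsub hj; simpa [Finset.mem_Icc] using this
    have hIcc : Finset.Icc j m ⊆ A := by
      intro j' hj'
      simp only [Finset.mem_Icc] at hj'
      exact reach_up A m hstep j' hj'.2 j hj hj'.1
    have hc := Finset.card_le_card hIcc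
    rw [Nat.card_Icc] at hc
    simp only [Finset.mem_Ioc]
    omega
  refine Finset.eq_of_subset_of_card_le hAsub ?_
  rw [Nat.card_Ioc]
  omega

lemma structure_lemma (m : ℕ) (S : Finset ℕ)
    (hsub : S ⊆ Finset.Icc 1 (2*m+1)) (hcard : S.card = m)
    (hballot : ∀ x ∈ Finset.Icc 1 (2*m+1), 2 * (S ∩ Finset.Icc 1 x).card ≤ x)
    (hdes : (tabDes (2*m+1) S).card = m) :
    ∃ k ≤ m, S = Tk m k := by
  -- 1 ∉ S
  have h1 : (1:ℕ) ∉ S := by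
    intro h
    have hb := hballot 1 (by simp only [Finset.mem_Icc]; omega)
    have hpos : 0 < (S ∩ Finset.Icc 1 1).card :=
      Finset.card_pos.mpr ⟨1, by simp only [Finset.mem_inter, Finset.mem_Icc]; exact ⟨h, by omega⟩⟩
    omega
  have hb : ∀ s ∈ S, 2 ≤ s ∧ s ≤ 2*m+1 := by
    intro s hs
    have h2 := hsub hs
    simp only [Finset.mem_Icc] at h2
    have : s ≠ 1 := fun e => h1 (e ▸ hs)
    omega
  -- descents map onto S by +1
  have himg : (tabDes (2*m+1) S).image (· + 1) = S := by
    apply Finset.eq_of_subset_of_card_le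
    · intro x hx
      rw [Finset.mem_image] at hx
      obtain ⟨d, hd, rfl⟩ := hx
      simp only [tabDes, Finset.mem_filter] at hd
      exact hd.2.1
    · rw [Finset.card_image_of_injective _ (add_left_injective 1), hdes, hcard]
  -- no two consecutive elements
  have hnc : ∀ s ∈ S, s + 1 ∉ S := by
    intro s hs hs1
    rw [← himg] at hs1
    have : s + 1 ∈ (tabDes (2*m+1) S).image (· + 1) := hs1
    rw [Finset.mem_image] at this
    obtain ⟨d, hd, hde⟩ := this
    simp only [tabDes, Finset.mem_filter] at hd
    have hds : d = s := by omega
    exact hd.2.2 (hds ▸ hs)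
  -- each pair {2j, 2j+1} meets S
  have hpair : ∀ j, 1 ≤ j → j ≤ m → (2*j ∈ S ∨ 2*j+1 ∈ S) := by
    have hVsub : S.image (· / 2) ⊆ Finset.Icc 1 m := by
      intro x hx
      rw [Finset.mem_image] at hx
      obtain ⟨s, hs, rfl⟩ := hx
      have := hb s hs
      simp only [Finset.mem_Icc]
      omega
    have hVcard : (S.image (· / 2)).card = m := by
      rw [Finset.card_image_of_injOn, hcard]
      intro s hs t ht hst
      by_contra hne
      have h1' := hb s hs
      have h2' := hb t ht
      simp only at hst
      have hca : t = s + 1 ∨ s = t + 1 := by omega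
      rcases hca with h | h
      · exact hnc s hs (h ▸ ht)
      · exact hnc t ht (h ▸ hs)
    have hVeq : S.image (· / 2) = Finset.Icc 1 m :=
      Finset.eq_of_subset_of_card_le hVsub (by rw [hVcard, Nat.card_Icc]; omega)
    intro j hj1 hj2
    have hjV : j ∈ S.image (· / 2) := by
      rw [hVeq]; simp only [Finset.mem_Icc]; omega
    rw [Finset.mem_image] at hjV
    obtain ⟨s, hs, hse⟩ := hjV
    have hsb := hb s hs
    have hcase : s = 2*j ∨ s = 2*j+1 := by omega
    rcases hcase with rfl | rfl
    · exact Or.inl hs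
    · exact Or.inr hs
  -- the switch set
  set A := (Finset.Icc 1 m).filter (fun j => 2*j+1 ∈ S) with hA
  set k := A.card with hk
  have hAsub : A ⊆ Finset.Icc 1 m := Finset.filter_subset _ _
  have hkm : k ≤ m := by
    have h := Finset.card_le_card hAsub
    rw [Nat.card_Icc] at h
    omega
  have hstep : ∀ j ∈ A, j < m → j + 1 ∈ A := by
    intro j hj hjm
    rw [hA, Finset.mem_filter, Finset.mem_Icc] at hj
    obtain ⟨⟨hj1, hj2⟩, hjS⟩ := hj
    have h2j2 : 2*j+1+1 ∉ S := hnc (2*j+1) hjS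
    have h2j3 : 2*(j+1)+1 ∈ S := by
      rcases hpair (j+1) (by omega) (by omega) with h | h
      · have e : 2*(j+1) = 2*j+1+1 := by omega
        rw [e] at h
        exact absurd h h2j2
      · exact h
    rw [hA, Finset.mem_filter, Finset.mem_Icc]
    exact ⟨⟨by omega, by omega⟩, h2j3⟩
  have hAeq : A = Finset.Ioc (m - k) m := upward_closed_eq m A hAsub hstep
  have hmemA : ∀ j, 1 ≤ j → j ≤ m → (2*j+1 ∈ S ↔ m - k < j) := by
    intro j hj1 hj2
    constructor
    · intro h
      have : j ∈ A := by
        rw [hA, Finset.mem_filter, Finset.mem_Icc]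
        exact ⟨⟨hj1, hj2⟩, h⟩
      rw [hAeq, Finset.mem_Ioc] at this
      omega
    · intro h
      have : j ∈ A := by
        rw [hAeq, Finset.mem_Ioc]
        omega
      rw [hA, Finset.mem_filter] at this
      exact this.2
  refine ⟨k, hkm, ?_⟩
  ext x
  rw [Tk, Finset.mem_image]
  constructor
  · intro hx
    have hbx := hb x hx
    refine ⟨x / 2, by simp only [Finset.mem_Icc]; omega, ?_⟩
    set j := x / 2 with hjdef
    have hj1 : 1 ≤ j := by omega
    have hj2 : j ≤ m := by omega
    have hx2 : x = 2*j ∨ x = 2*j+1 := by omega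
    rcases hx2 with h | h
    · have hno : 2*j+1 ∉ S := by
        have := hnc x hx
        intro hc
        exact this (by rw [h]; exact hc)
      have hnot : ¬ (m - k < j) := fun hc => hno ((hmemA j hj1 hj2).mpr hc)
      rw [if_neg hnot]
      omega
    · have : m - k < j := (hmemA j hj1 hj2).mp (h ▸ hx)
      rw [if_pos this]
      omega
  · rintro ⟨j, hj, rfl⟩
    simp only [Finset.mem_Icc] at hj
    by_cases hc : m - k < j
    · rw [if_pos hc]
      exact (hmemA j hj.1 hj.2).mpr hc
    · rw [if_neg hc]
      rcases hpair j hj.1 hj.2 with h | h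
      · exact h
      · exact absurd ((hmemA j hj.1 hj.2).mp h) hc

/-- For odd `n = 2m+1`, every standard Young tableau of shape `(m+1, m)` with exactly `m`
descents has major index between `m²` and `m² + m`, and for each `M` in this range there
is exactly one such tableau with major index `M`. -/
theorem syt_odd_max_descents (m : ℕ) :
    (∀ S ∈ (sytSet (2 * m + 1) m).filter (fun S => (tabDes (2 * m + 1) S).card = m),
        m ^ 2 ≤ tabMaj (2 * m + 1) S ∧ tabMaj (2 * m + 1) S ≤ m ^ 2 + m) ∧
      ∀ M, m ^ 2 ≤ M → M ≤ m ^ 2 + m →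
        ((sytSet (2 * m + 1) m).filter
          (fun S => (tabDes (2 * m + 1) S).card = m ∧ tabMaj (2 * m + 1) S = M)).card = 1 := by
  have key : ∀ S, S ∈ sytSet (2*m+1) m → (tabDes (2*m+1) S).card = m →
      ∃ k ≤ m, S = Tk m k := by
    intro S hS hd
    rw [mem_sytSet_iff] at hS
    exact structure_lemma m S hS.1 hS.2.1 hS.2.2 hd
  have hTk_mem : ∀ k, Tk m k ∈ sytSet (2*m+1) m := by
    intro k
    rw [mem_sytSet_iff]
    exact ⟨Tk_sub m k, Tk_card m k, fun x _ => Tk_ballot m k x⟩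
  constructor
  · intro S hS
    rw [Finset.mem_filter] at hS
    obtain ⟨k, hk, rfl⟩ := key S hS.1 hS.2
    rw [Tk_maj m k hk]
    omega
  · intro M hM1 hM2
    set k := M - m^2 with hkdef
    have hk : k ≤ m := by omega
    have hMk : M = m^2 + k := by omega
    have heq : (sytSet (2*m+1) m).filter
        (fun S => (tabDes (2*m+1) S).card = m ∧ tabMaj (2*m+1) S = M) = {Tk m k} := by
      ext S
      simp only [Finset.mem_filter, Finset.mem_singleton]
      constructor
      · rintro ⟨h1, h2, h3⟩
        obtain ⟨k', hk', rfl⟩ := key S h1 h2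
        rw [Tk_maj m k' hk'] at h3
        have : k' = k := by omega
        rw [this]
      · rintro rfl
        exact ⟨hTk_mem k, Tk_des_card m k, by rw [Tk_maj m k hk]; omega⟩
    rw [heq, Finset.card_singleton]
end

section
/- For n ≥ 1, the generating function by major index of 321-avoiding permutations of length n with exactly one descent equals (1+q)^n - (1+q+q²+...+q^n). -/
open Finset Polynomial
open scoped Classical

/-- The descent set of a permutation `σ` of `{1,…,n}` (as a permutation of `Fin n`,
written in one-line notation with 1-based positions): those positions `i ∈ {1,…,n-1}`
with `σ(i) > σ(i+1)`. -/
noncomputable def permDes (n : ℕ) (σ : Equiv.Perm (Fin n)) : Finset ℕ :=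
  (Finset.Ico 1 n).filter (fun i => ∀ h : i < n, σ ⟨i, h⟩ < σ ⟨i - 1, by omega⟩)

/-- The major index: the sum of the descent positions. -/
noncomputable def permMaj (n : ℕ) (σ : Equiv.Perm (Fin n)) : ℕ := (permDes n σ).sum id

/-- `σ` avoids the pattern 321. -/
def Avoids321 {n : ℕ} (σ : Equiv.Perm (Fin n)) : Prop :=
  ¬ ∃ i j k : Fin n, i < j ∧ j < k ∧ σ k < σ j ∧ σ j < σ i

/-- `σ` avoids the pattern 132. -/
def Avoids132 {n : ℕ} (σ : Equiv.Perm (Fin n)) : Prop :=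
  ¬ ∃ i j k : Fin n, i < j ∧ j < k ∧ σ i < σ k ∧ σ k < σ j

/-- `σ` avoids the pattern 231. -/
def Avoids231 {n : ℕ} (σ : Equiv.Perm (Fin n)) : Prop :=
  ¬ ∃ i j k : Fin n, i < j ∧ j < k ∧ σ k < σ i ∧ σ i < σ j

/-- `A n i = ∑ q^{maj σ}` over 321-avoiding permutations of length `n` with exactly
`i` descents. -/
noncomputable def A (n i : ℕ) : Polynomial ℚ :=
  (Finset.univ.filter
      (fun σ : Equiv.Perm (Fin n) => Avoids321 σ ∧ (permDes n σ).card = i)).sum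
    (fun σ => Polynomial.X ^ permMaj n σ)

namespace Aux

variable {n : ℕ}

lemma mem_permDes_iff {σ : Equiv.Perm (Fin n)} {i : ℕ} (h1 : 1 ≤ i) (h2 : i < n) :
    i ∈ permDes n σ ↔ σ ⟨i, h2⟩ < σ ⟨i - 1, by omega⟩ := by
  unfold permDes
  simp only [Finset.mem_filter, Finset.mem_Ico]
  constructor
  · rintro ⟨-, h⟩; exact h h2
  · intro h; exact ⟨⟨h1, h2⟩, fun _ => h⟩

lemma permDes_subset {σ : Equiv.Perm (Fin n)} : permDes n σ ⊆ Finset.Ico 1 n :=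
  Finset.filter_subset _ _

lemma step_lt {σ : Equiv.Perm (Fin n)} {i : ℕ} (h1 : 1 ≤ i) (h2 : i < n)
    (h : i ∉ permDes n σ) : σ ⟨i - 1, by omega⟩ < σ ⟨i, h2⟩ := by
  rw [mem_permDes_iff h1 h2] at h
  have hne : σ ⟨i - 1, by omega⟩ ≠ σ ⟨i, h2⟩ := by
    intro he
    have := σ.injective he
    simp [Fin.ext_iff] at this
    omega
  exact lt_of_le_of_ne (not_lt.mp h) hne

lemma ascent_chain (σ : Equiv.Perm (Fin n)) :
    ∀ (k : ℕ) (a b : Fin n), b.val = a.val + k + 1 →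
      (∀ i, a.val < i → i ≤ b.val → i ∉ permDes n σ) → σ a < σ b := by
  intro k
  induction k with
  | zero =>
    intro a b hb H
    have h1 : 1 ≤ b.val := by omega
    have h := step_lt h1 b.isLt (H b.val (by omega) le_rfl)
    have ha : (⟨b.val - 1, by omega⟩ : Fin n) = a := by
      ext; simp; omega
    rw [ha] at h
    exact h
  | succ k ih =>
    intro a b hb H
    have hb1 : 1 ≤ b.val := by omega
    have h1 : σ a < σ ⟨b.val - 1, by omega⟩ := by
      refine ih a ⟨b.val - 1, by omega⟩ (by simp; omega) (fun i hi1 hi2 => H i hi1 (by simp at hi2; omega))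
    have h2 : σ ⟨b.val - 1, by omega⟩ < σ b := step_lt hb1 b.isLt (H b.val (by omega) le_rfl)
    exact h1.trans h2

lemma exists_descent {σ : Equiv.Perm (Fin n)} {a b : Fin n} (hab : a < b) (h : σ b < σ a) :
    ∃ t, a.val < t ∧ t ≤ b.val ∧ t ∈ permDes n σ := by
  by_contra hc
  push_neg at hc
  have hab' : a.val < b.val := hab
  have : σ a < σ b :=
    ascent_chain σ (b.val - a.val - 1) a b (by omega) (fun i hi1 hi2 => hc i hi1 hi2)
  exact absurd h (lt_asymm this)

lemma avoids321_of_card_le_one {σ : Equiv.Perm (Fin n)} (h : (permDes n σ).card ≤ 1) :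
    Avoids321 σ := by
  rintro ⟨i, j, k, hij, hjk, h1, h2⟩
  obtain ⟨t1, ht1a, ht1b, ht1⟩ := exists_descent hij h2
  obtain ⟨t2, ht2a, ht2b, ht2⟩ := exists_descent hjk h1
  have hjj : j.val < k.val := hjk
  have hne : t1 ≠ t2 := by omega
  have hsub : ({t1, t2} : Finset ℕ) ⊆ permDes n σ := by
    intro x hx
    simp at hx
    rcases hx with rfl | rfl <;> assumption
  have := Finset.card_le_card hsub
  rw [Finset.card_insert_of_notMem (by simp [hne]), Finset.card_singleton] at this
  omega

end Aux

namespace Aux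

variable {n d : ℕ}

/-- the "bottom" set `{0, …, d-1}` inside `Fin n`. -/
noncomputable def bot (n d : ℕ) : Finset (Fin n) := univ.filter (fun i => i.val < d)

lemma card_bot (hd : d ≤ n) : (bot n d).card = d := by
  have : bot n d = Finset.map (Fin.castLEEmb hd) univ := by
    ext i
    simp only [bot, Finset.mem_filter, Finset.mem_univ, true_and, Finset.mem_map,
      Fin.castLEEmb, Finset.mem_univ]
    constructor
    · intro h; exact ⟨⟨i.val, h⟩, rfl⟩
    · rintro ⟨j, -, rfl⟩
      simpa using j.isLt
  rw [this]; simp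

lemma card_compl_set {S : Finset (Fin n)} (hd : d ≤ n) (hS : S.card = d) :
    Sᶜ.card = n - d := by
  rw [Finset.card_compl, hS, Fintype.card_fin]

/-- the underlying function of the permutation associated to a `d`-subset `S`. -/
noncomputable def pf (hd : d ≤ n) (S : Finset (Fin n)) (hS : S.card = d) (i : Fin n) : Fin n :=
  if h : i.val < d then S.orderEmbOfFin hS ⟨i.val, h⟩
  else Sᶜ.orderEmbOfFin (card_compl_set hd hS) ⟨i.val - d, by have := i.isLt; omega⟩

lemma pf_inj (hd : d ≤ n) (S : Finset (Fin n)) (hS : S.card = d) :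
    Function.Injective (pf hd S hS) := by
  intro i j hij
  unfold pf at hij
  by_cases hi : i.val < d <;> by_cases hj : j.val < d
  · rw [dif_pos hi, dif_pos hj] at hij
    have := (S.orderEmbOfFin hS).injective hij
    simp only [Fin.mk.injEq] at this
    exact Fin.ext this
  · rw [dif_pos hi, dif_neg hj] at hij
    have h1 := S.orderEmbOfFin_mem hS ⟨i.val, hi⟩
    have h2 := Sᶜ.orderEmbOfFin_mem (card_compl_set hd hS) ⟨j.val - d, by have := j.isLt; omega⟩
    rw [hij] at h1
    rw [Finset.mem_compl] at h2
    exact absurd h1 h2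
  · rw [dif_neg hi, dif_pos hj] at hij
    have h1 := S.orderEmbOfFin_mem hS ⟨j.val, hj⟩
    have h2 := Sᶜ.orderEmbOfFin_mem (card_compl_set hd hS) ⟨i.val - d, by have := i.isLt; omega⟩
    rw [← hij] at h1
    rw [Finset.mem_compl] at h2
    exact absurd h1 h2
  · rw [dif_neg hi, dif_neg hj] at hij
    have := (Sᶜ.orderEmbOfFin (card_compl_set hd hS)).injective hij
    simp only [Fin.mk.injEq] at this
    exact Fin.ext (by omega)

/-- the permutation associated to a `d`-subset `S`. -/
noncomputable def sigma (hd : d ≤ n) (S : Finset (Fin n)) (hS : S.card = d) :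
    Equiv.Perm (Fin n) :=
  Equiv.ofBijective _ ((Finite.injective_iff_bijective).mp (pf_inj hd S hS))

lemma sigma_apply (hd : d ≤ n) (S : Finset (Fin n)) (hS : S.card = d) (i : Fin n) :
    sigma hd S hS i = pf hd S hS i := rfl

lemma image_sigma (hd : d ≤ n) (S : Finset (Fin n)) (hS : S.card = d) :
    (bot n d).image (sigma hd S hS) = S := by
  apply Finset.eq_of_subset_of_card_le
  · intro x hx
    simp only [Finset.mem_image, bot, Finset.mem_filter, Finset.mem_univ, true_and] at hx
    obtain ⟨i, hi, rfl⟩ := hx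
    rw [sigma_apply, pf, dif_pos hi]
    exact S.orderEmbOfFin_mem hS _
  · rw [Finset.card_image_of_injective _ (sigma hd S hS).injective, card_bot hd, hS]

end Aux

namespace Aux

variable {n d : ℕ}

/-- a permutation whose descents are contained in `{d}` is `sigma` of its first-block image. -/
lemma eq_sigma {σ : Equiv.Perm (Fin n)} (hd : d ≤ n)
    (hS : ((bot n d).image σ).card = d)
    (hdes : ∀ i, 1 ≤ i → i < n → i ≠ d → i ∉ permDes n σ) (i : Fin n) :
    σ i = pf hd ((bot n d).image σ) hS i := by
  set S := (bot n d).image σ with hSdef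
  -- first block
  have hf : (fun k : Fin d => σ ⟨k.val, lt_of_lt_of_le k.isLt hd⟩) = S.orderEmbOfFin hS := by
    apply Finset.orderEmbOfFin_unique
    · intro x
      simp only [hSdef, Finset.mem_image, bot, Finset.mem_filter, Finset.mem_univ, true_and]
      exact ⟨⟨x.val, lt_of_lt_of_le x.isLt hd⟩, x.isLt, rfl⟩
    · intro k l hkl
      have hkl' : k.val < l.val := hkl
      refine ascent_chain σ (l.val - k.val - 1) _ _ (by simp; omega) ?_
      intro t ht1 ht2
      simp only at ht1 ht2
      exact hdes t (by omega) (by have := l.isLt; omega) (by have := l.isLt; omega)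
  -- second block
  have hg : (fun k : Fin (n - d) => σ ⟨d + k.val, by have := k.isLt; omega⟩)
      = Sᶜ.orderEmbOfFin (card_compl_set hd hS) := by
    apply Finset.orderEmbOfFin_unique
    · intro x
      rw [Finset.mem_compl]
      intro hmem
      simp only [hSdef, Finset.mem_image, bot, Finset.mem_filter, Finset.mem_univ,
        true_and] at hmem
      obtain ⟨j, hj, hj2⟩ := hmem
      have := σ.injective hj2
      rw [this] at hj
      simp at hj
    · intro k l hkl
      have hkl' : k.val < l.val := hkl
      refine ascent_chain σ (l.val - k.val - 1) _ _ (by simp; omega) ?_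
      intro t ht1 ht2
      simp only at ht1 ht2
      exact hdes t (by omega) (by have := l.isLt; omega) (by omega)
  by_cases hi : i.val < d
  · have := congrFun hf ⟨i.val, hi⟩
    simpa [pf, dif_pos hi] using this
  · have := congrFun hg ⟨i.val - d, by have := i.isLt; omega⟩
    simp only at this
    rw [pf, dif_neg hi]
    rw [← this]
    congr 1
    ext
    simp
    omega

lemma des_sigma_subset (hd : d ≤ n) (S : Finset (Fin n)) (hS : S.card = d) :
    permDes n (sigma hd S hS) ⊆ {d} := by
  intro i hi
  have hIco := permDes_subset hi
  simp only [Finset.mem_Ico] at hIco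
  rw [mem_permDes_iff hIco.1 hIco.2] at hi
  simp only [sigma_apply, pf] at hi
  rw [Finset.mem_singleton]
  by_contra hne
  rcases lt_or_gt_of_ne hne with h | h
  · -- i < d : both in first block, ascending
    rw [dif_pos (show i < d by omega), dif_pos (show i - 1 < d by omega)] at hi
    have := (S.orderEmbOfFin hS).strictMono (show (⟨i - 1, by omega⟩ : Fin d) < ⟨i, by omega⟩ by
      simp [Fin.lt_def]; omega)
    exact absurd hi (lt_asymm this)
  · -- i > d : both in second block
    rw [dif_neg (show ¬ i < d by omega), dif_neg (show ¬ i - 1 < d by omega)] at hi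
    have := (Sᶜ.orderEmbOfFin (card_compl_set hd hS)).strictMono
      (show (⟨i - 1 - d, by have := hIco.2; omega⟩ : Fin (n - d)) < ⟨i - d, by have := hIco.2; omega⟩ by
        simp [Fin.lt_def]; omega)
    exact absurd hi (lt_asymm this)

lemma d_mem_des_sigma (hd1 : 1 ≤ d) (hd2 : d < n) (S : Finset (Fin n)) (hS : S.card = d)
    (hne : S ≠ bot n d) : d ∈ permDes n (sigma hd2.le S hS) := by
  rw [mem_permDes_iff hd1 hd2]
  simp only [sigma_apply, pf, dif_neg (show ¬ d < d by omega), dif_pos (show d - 1 < d by omega)]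
  -- there is x ∈ S with d ≤ x.val
  obtain ⟨x, hxS, hx⟩ : ∃ x ∈ S, d ≤ x.val := by
    by_contra hc
    push_neg at hc
    apply hne
    apply Finset.eq_of_subset_of_card_le
    · intro y hy
      simp only [bot, Finset.mem_filter, Finset.mem_univ, true_and]
      exact hc y hy
    · rw [card_bot hd2.le, hS]
  obtain ⟨y, hyS, hy⟩ : ∃ y ∈ Sᶜ, y.val < d := by
    by_contra hc
    push_neg at hc
    apply hne
    symm
    apply Finset.eq_of_subset_of_card_le
    · intro z hz
      simp only [bot, Finset.mem_filter, Finset.mem_univ, true_and] at hz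
      by_contra hzS
      exact absurd hz (not_lt.mpr (hc z (Finset.mem_compl.mpr hzS)))
    · rw [card_bot hd2.le, hS]
  -- max of first block ≥ x, min of second block ≤ y
  obtain ⟨kx, hkx⟩ : ∃ k : Fin d, S.orderEmbOfFin hS k = x := by
    have : x ∈ Set.range (S.orderEmbOfFin hS) := by
      rw [Finset.range_orderEmbOfFin]; exact hxS
    exact this
  obtain ⟨ky, hky⟩ : ∃ k : Fin (n - d), Sᶜ.orderEmbOfFin (card_compl_set hd2.le hS) k = y := by
    have : y ∈ Set.range (Sᶜ.orderEmbOfFin (card_compl_set hd2.le hS)) := by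
      rw [Finset.range_orderEmbOfFin]; exact hyS
    exact this
  have h1 : x ≤ S.orderEmbOfFin hS ⟨d - 1, by omega⟩ := by
    rw [← hkx]
    exact (S.orderEmbOfFin hS).monotone (by simp [Fin.le_def]; have := kx.isLt; omega)
  have h2 : Sᶜ.orderEmbOfFin (card_compl_set hd2.le hS) ⟨d - d, by omega⟩ ≤ y := by
    rw [← hky]
    exact (Sᶜ.orderEmbOfFin (card_compl_set hd2.le hS)).monotone (by simp [Fin.le_def])
  calc Sᶜ.orderEmbOfFin (card_compl_set hd2.le hS) ⟨d - d, by omega⟩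
      ≤ y := h2
    _ < x := by rw [Fin.lt_def]; omega
    _ ≤ S.orderEmbOfFin hS ⟨d - 1, by omega⟩ := h1

end Aux

namespace Aux

variable {n d : ℕ}

lemma card_T (hd1 : 1 ≤ d) (hd2 : d < n) :
    (univ.filter (fun σ : Equiv.Perm (Fin n) => permDes n σ = {d})).card = n.choose d - 1 := by
  have hcount : (univ.filter (fun S : Finset (Fin n) => S.card = d ∧ S ≠ bot n d)).card
      = n.choose d - 1 := by
    have h1 : univ.filter (fun S : Finset (Fin n) => S.card = d ∧ S ≠ bot n d)
        = (univ.filter (fun S : Finset (Fin n) => S.card = d)).erase (bot n d) := by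
      ext S
      simp only [Finset.mem_filter, Finset.mem_univ, true_and, Finset.mem_erase]
      tauto
    have h2 : univ.filter (fun S : Finset (Fin n) => S.card = d)
        = Finset.powersetCard d (univ : Finset (Fin n)) := by
      ext S
      simp [Finset.mem_powersetCard]
    rw [h1, Finset.card_erase_of_mem (by simp [h2, Finset.mem_powersetCard, card_bot hd2.le]),
      h2, Finset.card_powersetCard]
    simp
  rw [← hcount]
  symm
  apply Finset.card_bij
    (i := fun S hS => sigma hd2.le S (by simp only [Finset.mem_filter] at hS; exact hS.2.1))
  · intro S hS
    simp only [Finset.mem_filter, Finset.mem_univ, true_and] at hS ⊢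
    apply Finset.Subset.antisymm (des_sigma_subset hd2.le S _)
    simp only [Finset.singleton_subset_iff]
    exact d_mem_des_sigma hd1 hd2 S hS.1 hS.2
  · intro S1 h1 S2 h2 heq
    have e1 := image_sigma hd2.le S1 (by simp only [Finset.mem_filter] at h1; exact h1.2.1)
    have e2 := image_sigma hd2.le S2 (by simp only [Finset.mem_filter] at h2; exact h2.2.1)
    rw [← e1, ← e2, heq]
  · intro σ hσ
    simp only [Finset.mem_filter, Finset.mem_univ, true_and] at hσ
    have hS : ((bot n d).image σ).card = d := by
      rw [Finset.card_image_of_injective _ σ.injective, card_bot hd2.le]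
    have hdes : ∀ i, 1 ≤ i → i < n → i ≠ d → i ∉ permDes n σ := by
      intro i _ _ hne hi
      rw [hσ, Finset.mem_singleton] at hi
      exact hne hi
    have hσeq : σ = sigma hd2.le ((bot n d).image σ) hS := by
      apply Equiv.ext
      intro i
      rw [sigma_apply]
      exact eq_sigma hd2.le hS hdes i
    refine ⟨(bot n d).image σ, ?_, hσeq.symm⟩
    simp only [Finset.mem_filter, Finset.mem_univ, true_and]
    refine ⟨hS, ?_⟩
    -- S ≠ bot: descent at d
    intro hbot
    have hd' : d ∈ permDes n σ := by rw [hσ]; exact Finset.mem_singleton_self d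
    rw [mem_permDes_iff hd1 hd2] at hd'
    have hmem : σ ⟨d - 1, by omega⟩ ∈ (bot n d).image σ :=
      Finset.mem_image_of_mem σ (by simp [bot]; omega)
    have hnmem : σ ⟨d, hd2⟩ ∉ (bot n d).image σ := by
      intro hmem'
      obtain ⟨j, hj, hj2⟩ := Finset.mem_image.mp hmem'
      have := σ.injective hj2
      simp only [bot, Finset.mem_filter, Finset.mem_univ, true_and] at hj
      rw [this] at hj
      simp at hj
    have hmem2 := (Finset.ext_iff.mp hbot _).mp hmem
    have hnmem2 : σ ⟨d, hd2⟩ ∉ bot n d := fun h => hnmem ((Finset.ext_iff.mp hbot _).mpr h)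
    clear hmem hnmem
    simp only [bot, Finset.mem_filter, Finset.mem_univ, true_and, not_lt] at hmem2 hnmem2
    rw [Fin.lt_def] at hd'
    omega

end Aux

/-- The major-index generating function for 321-avoiding permutations of length `n ≥ 1`
with exactly one descent is `(1+q)^n - (1 + q + q² + ⋯ + q^n)`. -/
theorem A_one_descent (n : ℕ) (hn : 1 ≤ n) :
    A n 1 = (1 + Polynomial.X) ^ n - ∑ j ∈ Finset.range (n + 1), Polynomial.X ^ j := by
  have hfilter : (univ.filter
      (fun σ : Equiv.Perm (Fin n) => Avoids321 σ ∧ (permDes n σ).card = 1))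
      = univ.filter (fun σ : Equiv.Perm (Fin n) => (permDes n σ).card = 1) := by
    apply Finset.filter_congr
    intro σ _
    simp only [and_iff_right_iff_imp]
    intro h
    exact Aux.avoids321_of_card_le_one h.le
  have hset : univ.filter (fun σ : Equiv.Perm (Fin n) => (permDes n σ).card = 1)
      = (Finset.Ico 1 n).biUnion
          (fun d => univ.filter (fun σ : Equiv.Perm (Fin n) => permDes n σ = {d})) := by
    ext σ
    simp only [Finset.mem_filter, Finset.mem_univ, true_and, Finset.mem_biUnion,
      Finset.card_eq_one]
    constructor
    · rintro ⟨a, ha⟩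
      refine ⟨a, ?_, ha⟩
      have := Aux.permDes_subset (σ := σ) (ha ▸ Finset.mem_singleton_self a)
      simpa using this
    · rintro ⟨a, -, ha⟩; exact ⟨a, ha⟩
  have hdisj : (↑(Finset.Ico 1 n) : Set ℕ).PairwiseDisjoint
      (fun d => univ.filter (fun σ : Equiv.Perm (Fin n) => permDes n σ = {d})) := by
    intro x _ y _ hxy
    rw [Function.onFun, Finset.disjoint_left]
    intro σ h1 h2
    simp only [Finset.mem_filter, Finset.mem_univ, true_and] at h1 h2
    rw [h1] at h2
    exact hxy (Finset.singleton_injective h2)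
  have hinner : ∀ d ∈ Finset.Ico 1 n,
      (∑ σ ∈ univ.filter (fun σ : Equiv.Perm (Fin n) => permDes n σ = {d}),
        (Polynomial.X : ℚ[X]) ^ permMaj n σ) = (n.choose d - 1 : ℕ) • (X : ℚ[X]) ^ d := by
    intro d hd
    rw [Finset.mem_Ico] at hd
    have hterm : ∀ σ ∈ univ.filter (fun σ : Equiv.Perm (Fin n) => permDes n σ = {d}),
        (Polynomial.X : ℚ[X]) ^ permMaj n σ = X ^ d := by
      intro σ hσ
      simp only [Finset.mem_filter, Finset.mem_univ, true_and] at hσ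
      rw [permMaj, hσ]
      simp
    rw [Finset.sum_congr rfl hterm, Finset.sum_const, Aux.card_T hd.1 hd.2]
  rw [A, hfilter, hset, Finset.sum_biUnion hdisj, Finset.sum_congr rfl hinner]
  have h1 : ∀ d ∈ Finset.Ico 1 n,
      ((n.choose d - 1 : ℕ) • (X : ℚ[X]) ^ d) = ((n.choose d : ℚ[X]) - 1) * X ^ d := by
    intro d hd
    rw [Finset.mem_Ico] at hd
    rw [nsmul_eq_mul, Nat.cast_sub (Nat.choose_pos (by omega))]
    push_cast
    ring
  have hext : ∑ d ∈ Finset.Ico 1 n, (((n.choose d : ℚ[X]) - 1) * X ^ d)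
      = ∑ d ∈ Finset.range (n + 1), (((n.choose d : ℚ[X]) - 1) * X ^ d) := by
    apply Finset.sum_subset
    · intro x hx
      simp only [Finset.mem_Ico] at hx
      simp only [Finset.mem_range]
      omega
    · intro x hx hx2
      simp only [Finset.mem_range] at hx
      simp only [Finset.mem_Ico] at hx2
      have : x = 0 ∨ x = n := by omega
      rcases this with rfl | rfl <;> simp
  have h2 : ((1 + X : ℚ[X]) ^ n) = ∑ k ∈ Finset.range (n + 1), X ^ k * (n.choose k : ℚ[X]) := by
    rw [add_comm, add_pow]
    apply Finset.sum_congr rfl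
    intro k _
    simp
  rw [Finset.sum_congr rfl h1, hext, h2, ← Finset.sum_sub_distrib]
  apply Finset.sum_congr rfl
  intro k _
  ring
end

section
/- For each n and i, the polynomial A_{n,i}(q) = Σ q^{maj(σ)} over 321-avoiding permutations σ of length n with exactly i descents is symmetric: A_{n,i}(q) = q^{ni} A_{n,i}(1/q). -/
open Finset Polynomial
open scoped Classical

noncomputable def phi (n : ℕ) (σ : Equiv.Perm (Fin n)) : Equiv.Perm (Fin n) :=
  (Fin.revPerm.trans σ).trans Fin.revPerm

lemma phi_apply {n : ℕ} (σ : Equiv.Perm (Fin n)) (j : Fin n) :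
    phi n σ j = (σ j.rev).rev := rfl

lemma phi_phi {n : ℕ} (σ : Equiv.Perm (Fin n)) : phi n (phi n σ) = σ := by
  ext j
  simp [phi, Fin.rev_rev]

lemma avoids_phi_of {n : ℕ} {σ : Equiv.Perm (Fin n)} (h : Avoids321 σ) :
    Avoids321 (phi n σ) := by
  rintro ⟨a, b, c, hab, hbc, h1, h2⟩
  refine h ⟨c.rev, b.rev, a.rev, ?_, ?_, ?_, ?_⟩
  · exact Fin.rev_lt_rev.mpr hbc
  · exact Fin.rev_lt_rev.mpr hab
  · simpa [phi_apply, Fin.rev_lt_rev] using h2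
  · simpa [phi_apply, Fin.rev_lt_rev] using h1

lemma mem_des_phi {n : ℕ} (σ : Equiv.Perm (Fin n)) {j : ℕ} (h1 : 1 ≤ j) (h2 : j < n) :
    j ∈ permDes n (phi n σ) ↔ n - j ∈ permDes n σ := by
  have hnj1 : 1 ≤ n - j := by omega
  have hnj2 : n - j < n := by omega
  simp only [permDes, Finset.mem_filter, Finset.mem_Ico]
  constructor
  · rintro ⟨-, hd⟩
    refine ⟨⟨hnj1, hnj2⟩, fun h => ?_⟩
    have := hd h2
    simp only [phi_apply, Fin.rev_lt_rev] at this
    have e1 : (⟨j, h2⟩ : Fin n).rev = ⟨n - j - 1, by omega⟩ := by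
      ext; simp [Fin.val_rev]; omega
    have e2 : (⟨j - 1, by omega⟩ : Fin n).rev = ⟨n - j, by omega⟩ := by
      ext; simp [Fin.val_rev]; omega
    rw [e1, e2] at this
    convert this using 3 <;> omega
  · rintro ⟨-, hd⟩
    refine ⟨⟨h1, h2⟩, fun h => ?_⟩
    have := hd hnj2
    simp only [phi_apply, Fin.rev_lt_rev]
    have e1 : (⟨j, h2⟩ : Fin n).rev = ⟨n - j - 1, by omega⟩ := by
      ext; simp [Fin.val_rev]; omega
    have e2 : (⟨j - 1, by omega⟩ : Fin n).rev = ⟨n - j, by omega⟩ := by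
      ext; simp [Fin.val_rev]; omega
    rw [e1, e2]
    convert this using 3 <;> omega

lemma des_phi_eq {n : ℕ} (σ : Equiv.Perm (Fin n)) :
    permDes n (phi n σ) = (permDes n σ).image (fun k => n - k) := by
  ext j
  simp only [Finset.mem_image]
  constructor
  · intro hj
    have hj' : 1 ≤ j ∧ j < n := by
      have := hj; simp only [permDes, Finset.mem_filter, Finset.mem_Ico] at this
      exact this.1
    exact ⟨n - j, (mem_des_phi σ hj'.1 hj'.2).mp hj, by omega⟩
  · rintro ⟨k, hk, rfl⟩
    have hk' : 1 ≤ k ∧ k < n := by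
      have := hk; simp only [permDes, Finset.mem_filter, Finset.mem_Ico] at this
      exact this.1
    refine (mem_des_phi σ (by omega) (by omega)).mpr ?_
    have : n - (n - k) = k := by omega
    rwa [this]

lemma des_subset {n : ℕ} (σ : Equiv.Perm (Fin n)) :
    permDes n σ ⊆ Finset.Ico 1 n := Finset.filter_subset _ _

lemma injOn_sub {n : ℕ} (σ : Equiv.Perm (Fin n)) :
    Set.InjOn (fun k => n - k) (permDes n σ) := by
  intro a ha b hb hab
  have ha' := des_subset σ ha
  have hb' := des_subset σ hb
  simp only [Finset.mem_Ico] at ha' hb'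
  simp only at hab
  omega

lemma card_des_phi {n : ℕ} (σ : Equiv.Perm (Fin n)) :
    (permDes n (phi n σ)).card = (permDes n σ).card := by
  rw [des_phi_eq, Finset.card_image_of_injOn (injOn_sub σ)]

lemma maj_add {n i : ℕ} (σ : Equiv.Perm (Fin n)) (hc : (permDes n σ).card = i) :
    permMaj n σ + permMaj n (phi n σ) = n * i := by
  unfold permMaj
  rw [des_phi_eq, Finset.sum_image (fun a ha b hb => injOn_sub σ ha hb)]
  rw [← Finset.sum_add_distrib]
  have h : ∀ k ∈ permDes n σ, (id k + id (n - k) : ℕ) = n := by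
    intro k hk
    have := des_subset σ hk
    simp only [Finset.mem_Ico] at this
    simp only [id]
    omega
  rw [Finset.sum_congr rfl h, Finset.sum_const, hc, smul_eq_mul, mul_comm]

lemma coeff_A (n i M : ℕ) :
    (A n i).coeff M =
      ((Finset.univ.filter
        (fun σ : Equiv.Perm (Fin n) =>
          (Avoids321 σ ∧ (permDes n σ).card = i) ∧ permMaj n σ = M)).card : ℚ) := by
  unfold A
  rw [Polynomial.finset_sum_coeff]
  simp only [Polynomial.coeff_X_pow]
  rw [Finset.sum_boole, Finset.filter_filter]
  norm_cast
  congr 1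
  apply Finset.filter_congr
  intro σ _
  constructor <;> rintro ⟨h1, h2⟩ <;> exact ⟨h1, h2.symm⟩

/-- `A_{n,i}(q)` is symmetric: `A_{n,i}(q) = q^{ni} A_{n,i}(1/q)`, i.e. the coefficient
of `q^M` equals the coefficient of `q^{ni-M}` for all `M ≤ ni`, and all coefficients
above degree `ni` vanish. -/
theorem A_symmetric (n i : ℕ) :
    (∀ M : ℕ, M ≤ n * i → (A n i).coeff M = (A n i).coeff (n * i - M)) ∧
      ∀ M : ℕ, n * i < M → (A n i).coeff M = 0 := by
  constructor
  · intro M hM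
    rw [coeff_A n i M, coeff_A n i (n * i - M)]
    congr 1
    norm_cast
    apply Finset.card_bij' (fun σ _ => phi n σ) (fun σ _ => phi n σ)
    · intro σ hσ
      simp only [Finset.mem_filter, Finset.mem_univ, true_and] at hσ ⊢
      obtain ⟨⟨h1, h2⟩, h3⟩ := hσ
      refine ⟨⟨avoids_phi_of h1, by rw [card_des_phi, h2]⟩, ?_⟩
      have := maj_add σ h2
      omega
    · intro σ hσ
      simp only [Finset.mem_filter, Finset.mem_univ, true_and] at hσ ⊢
      obtain ⟨⟨h1, h2⟩, h3⟩ := hσ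
      refine ⟨⟨avoids_phi_of h1, by rw [card_des_phi, h2]⟩, ?_⟩
      have := maj_add σ h2
      omega
    · intro σ _; exact phi_phi σ
    · intro σ _; exact phi_phi σ
  · intro M hM
    rw [coeff_A n i M]
    norm_cast
    rw [Finset.card_eq_zero, Finset.filter_eq_empty_iff]
    rintro σ - ⟨⟨h1, h2⟩, h3⟩
    have := maj_add σ h2
    omega
end

section
/- For n ≥ 1, the number of 132-avoiding permutations of length n with exactly one descent and major index i (for 1 ≤ i ≤ n-1) equals n - i. -/
open Finset Polynomial
open scoped Classical

def fN (i t p : ℕ) : ℕ := if p < i then p + t else if p < i + t then p - i else p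
def gN (i t p : ℕ) : ℕ := if p < t then p + i else if p < i + t then p - t else p

lemma gN_fN (i t p : ℕ) : gN i t (fN i t p) = p := by
  simp only [fN, gN]; split_ifs <;> omega

lemma fN_gN (i t p : ℕ) : fN i t (gN i t p) = p := by
  simp only [fN, gN]; split_ifs <;> omega

lemma fN_lt {n i t p : ℕ} (h : i + t ≤ n) (hp : p < n) : fN i t p < n := by
  simp only [fN]; split_ifs <;> omega

lemma gN_lt {n i t p : ℕ} (h : i + t ≤ n) (hp : p < n) : gN i t p < n := by
  simp only [gN]; split_ifs <;> omega

noncomputable def P (n i t : ℕ) : Equiv.Perm (Fin n) :=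
  if h : i + t ≤ n then
    { toFun := fun p => ⟨fN i t p.1, fN_lt h p.2⟩
      invFun := fun p => ⟨gN i t p.1, gN_lt h p.2⟩
      left_inv := fun p => Fin.ext (gN_fN i t p.1)
      right_inv := fun p => Fin.ext (fN_gN i t p.1) }
  else 1

lemma P_apply {n i t : ℕ} (h : i + t ≤ n) (p : Fin n) : ((P n i t) p).1 = fN i t p.1 := by
  simp [P, h, Equiv.coe_fn_mk]

lemma P_des {n i t : ℕ} (hi : 1 ≤ i) (ht : 1 ≤ t) (h : i + t ≤ n) :
    permDes n (P n i t) = {i} := by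
  ext d
  simp only [permDes, Finset.mem_filter, Finset.mem_Ico, Finset.mem_singleton]
  constructor
  · rintro ⟨⟨h1, h2⟩, h3⟩
    have h5 := h3 h2
    rw [Fin.lt_def, P_apply h, P_apply h] at h5
    simp only [fN] at h5
    split_ifs at h5 <;> omega
  · rintro rfl
    refine ⟨⟨hi, by omega⟩, fun hh => ?_⟩
    rw [Fin.lt_def, P_apply h, P_apply h]
    simp only [fN]
    split_ifs <;> omega

lemma P_avoid {n i t : ℕ} (h : i + t ≤ n) : Avoids132 (P n i t) := by
  rintro ⟨a, b, c, h1, h2, h3, h4⟩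
  rw [Fin.lt_def] at h1 h2 h3 h4
  rw [P_apply h, P_apply h] at h3 h4
  have ha := a.2
  have hb := b.2
  have hc := c.2
  simp only [fN] at h3 h4
  split_ifs at h3 h4 <;> omega

lemma forward132 {n i : ℕ} (hi : 1 ≤ i) (σ : Equiv.Perm (Fin n))
    (hav : Avoids132 σ) (hdes : permDes n σ = {i}) :
    ∃ t, 1 ≤ t ∧ i + t ≤ n ∧ σ = P n i t := by
  have him : i ∈ permDes n σ := hdes ▸ Finset.mem_singleton_self i
  rw [permDes, Finset.mem_filter, Finset.mem_Ico] at him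
  have hin : i < n := him.1.2
  have h0n : 0 < n := by omega
  set v : ℕ → ℕ := fun p => if h : p < n then (σ ⟨p, h⟩).1 else p with hv
  have hvlt : ∀ p, p < n → v p < n := by
    intro p hp
    simp only [hv]
    rw [dif_pos hp]
    exact (σ ⟨p, hp⟩).2
  have hvinj : ∀ p q, p < n → q < n → v p = v q → p = q := by
    intro p q hp hq hpq
    simp only [hv] at hpq
    rw [dif_pos hp, dif_pos hq] at hpq
    have := σ.injective (Fin.val_injective hpq)
    simpa using this
  have hvsurj : ∀ m, m < n → ∃ p, p < n ∧ v p = m := by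
    intro m hm
    refine ⟨(σ.symm ⟨m, hm⟩).1, (σ.symm ⟨m, hm⟩).2, ?_⟩
    simp only [hv]
    rw [dif_pos (σ.symm ⟨m, hm⟩).2]
    simp
  have hdesc : v i < v (i - 1) := by
    have h5 := him.2 hin
    rw [Fin.lt_def] at h5
    simp only [hv]
    rw [dif_pos hin, dif_pos (show i - 1 < n by omega)]
    exact h5
  have hnd : ∀ d, 1 ≤ d → d < n → d ≠ i → v (d - 1) < v d := by
    intro d h1 h2 h3
    have hd' : d ∉ permDes n σ := by rw [hdes]; simp [h3]
    rw [permDes, Finset.mem_filter, Finset.mem_Ico] at hd'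
    push_neg at hd'
    obtain ⟨hh, h4⟩ := hd' ⟨h1, h2⟩
    have h5 : v (d-1) ≠ v d := fun he => by
      have := hvinj _ _ (show d - 1 < n by omega) h2 he; omega
    have h6 : v (d-1) ≤ v d := by
      rw [Fin.le_def] at h4
      simp only [hv]
      rw [dif_pos h2, dif_pos (show d - 1 < n by omega)]
      exact h4
    omega
  have HMaux : ∀ k a, a + k < n → (∀ d, a < d → d ≤ a + k → d ≠ i) → v a + k ≤ v (a + k) := by
    intro k
    induction k with
    | zero => intro a _ _; simp
    | succ k ih =>
      intro a hb hd
      have h1 := ih a (by omega) (fun d u1 u2 => hd d u1 (by omega))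
      have h2 := hnd (a + k + 1) (by omega) (by omega) (hd _ (by omega) (by omega))
      have h3 : a + k + 1 - 1 = a + k := by omega
      rw [h3] at h2
      show v a + (k+1) ≤ v (a + k + 1)
      omega
  have HM : ∀ a b, a ≤ b → b < n → (∀ d, a < d → d ≤ b → d ≠ i) → v a + (b - a) ≤ v b := by
    intro a b hab hb hd
    have h1 := HMaux (b - a) a (by omega) (fun d u1 u2 => hd d u1 (by omega))
    have h3 : a + (b - a) = b := by omega
    rw [h3] at h1
    exact h1
  have hav' : ∀ a b c, a < b → b < c → c < n → v c < v b → v a < v c → False := by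
    intro a b c h1 h2 h3 h4 h5
    refine hav ⟨⟨a, by omega⟩, ⟨b, by omega⟩, ⟨c, h3⟩, Fin.mk_lt_mk.mpr h1, Fin.mk_lt_mk.mpr h2, ?_, ?_⟩
    · rw [Fin.lt_def]
      simp only [hv] at h5
      rw [dif_pos (show a < n by omega), dif_pos h3] at h5
      exact h5
    · rw [Fin.lt_def]
      simp only [hv] at h4
      rw [dif_pos h3, dif_pos (show b < n by omega)] at h4
      exact h4
  -- run 1
  have run1 : ∀ p, p < i → v p = v 0 + p := by
    intro p
    induction p with
    | zero => intro _; simp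
    | succ p ih =>
      intro hp
      have hvp : v p = v 0 + p := ih (by omega)
      have hlt : v p < v (p+1) := by
        have h1 := hnd (p+1) (by omega) (by omega) (by omega)
        have h2 : p + 1 - 1 = p := by omega
        rw [h2] at h1
        exact h1
      by_contra hne
      have hg : v 0 + p + 1 < v (p + 1) := by omega
      have hvb : v 0 + p + 1 < n := by have := hvlt (p+1) (by omega); omega
      obtain ⟨q, hq, hqv⟩ := hvsurj (v 0 + p + 1) hvb
      rcases Nat.lt_trichotomy q (p+1) with h | h | h
      · have := HM q p (by omega) (by omega) (fun d u1 u2 => by omega)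
        omega
      · subst h; omega
      · by_cases hqi : q < i
        · have := HM (p+1) q (by omega) hq (fun d u1 u2 => by omega)
          omega
        · exact hav' p (p+1) q (by omega) (by omega) hq (by omega) (by omega)
  have hti : v 0 + i ≤ n := by
    have h1 := run1 (i-1) (by omega)
    have h2 := hvlt (i-1) (by omega)
    omega
  have hvi_lt : v i < v 0 := by
    have h1 := run1 (i-1) (by omega)
    by_contra hge
    push_neg at hge
    have hr : v (v i - v 0) = v 0 + (v i - v 0) := run1 (v i - v 0) (by omega)
    have := hvinj (v i - v 0) i (by omega) hin (by omega)
    omega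
  have ht1 : 1 ≤ v 0 := by omega
  -- run 2
  have run2 : ∀ k, k < v 0 → i + k < n ∧ v (i + k) = k := by
    intro k
    induction k with
    | zero =>
      intro _
      refine ⟨by omega, ?_⟩
      obtain ⟨q, hq, hqv⟩ := hvsurj 0 (by omega)
      have hqi : q = i := by
        rcases Nat.lt_trichotomy q i with h | h | h
        · have := run1 q h; omega
        · exact h
        · have := HM i q (by omega) hq (fun d u1 u2 => by omega); omega
      rw [show i + 0 = q by omega]
      exact hqv
    | succ k ih =>
      intro hk
      obtain ⟨hkn, hvk⟩ := ih (by omega)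
      have hv0n : v 0 < n := hvlt 0 (by omega)
      obtain ⟨q, hq, hqv⟩ := hvsurj (k+1) (by omega)
      have hq1 : ¬ q < i := fun h => by have := run1 q h; omega
      have hq2 : ¬ q ≤ i + k := fun h => by
        have := HM q (i+k) h hkn (fun d u1 u2 => by omega)
        omega
      have hbound : i + (k+1) < n := by omega
      refine ⟨hbound, ?_⟩
      have hq3 : q = i + k + 1 := by
        by_contra hq4
        have h5 : i + k + 1 < q := by omega
        have h6 := HM (i+k+1) q (by omega) hq (fun d u1 u2 => by omega)
        have h7 := hnd (i+k+1) (by omega) (by omega) (by omega)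
        have h8 : i + k + 1 - 1 = i + k := by omega
        rw [h8] at h7
        omega
      rw [show i + (k+1) = q by omega]
      exact hqv
  have hit : i + v 0 ≤ n := by
    have := (run2 (v 0 - 1) (by omega)).1
    omega
  -- run 3
  have hge0 : ∀ p, i + v 0 ≤ p → p < n → i + v 0 ≤ v p := by
    intro p h1 h2
    by_contra h3
    push_neg at h3
    rcases Nat.lt_or_ge (v p) (v 0) with h4 | h4
    · obtain ⟨h5, h6⟩ := run2 (v p) h4
      have := hvinj p (i + v p) h2 h5 (by omega)
      omega
    · have h5 := run1 (v p - v 0) (by omega)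
      have := hvinj p (v p - v 0) h2 (by omega) (by omega)
      omega
  have run3 : ∀ p, i + v 0 ≤ p → p < n → v p = p := by
    intro p h1 h2
    have hA : i + v 0 ≤ v (i + v 0) := hge0 (i + v 0) le_rfl (by omega)
    have hB := HM (i + v 0) p h1 h2 (fun d u1 u2 => by omega)
    have hC := HM p (n-1) (by omega) (by omega) (fun d u1 u2 => by omega)
    have hD := hvlt (n-1) (by omega)
    omega
  refine ⟨v 0, ht1, hit, ?_⟩
  apply Equiv.ext
  intro p
  apply Fin.ext
  rw [P_apply hit p]
  have hvp : (σ p).1 = v p.1 := by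
    simp only [hv]
    rw [dif_pos p.2]
  rw [hvp]
  simp only [fN]
  split_ifs with h1 h2
  · have := run1 p.1 h1; omega
  · obtain ⟨hu, hw⟩ := run2 (p.1 - i) (by omega)
    rw [show i + (p.1 - i) = p.1 by omega] at hw
    omega
  · exact run3 p.1 (by omega) p.2


/-- The number of 132-avoiding permutations of length `n ≥ 1` with exactly one descent
and major index `i` (for `1 ≤ i ≤ n-1`) is `n - i`. -/
theorem count_132_one_descent (n i : ℕ) (hn : 1 ≤ n) (hi : 1 ≤ i) (hi' : i ≤ n - 1) :
    (Finset.univ.filter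
        (fun σ : Equiv.Perm (Fin n) =>
          Avoids132 σ ∧ (permDes n σ).card = 1 ∧ permMaj n σ = i)).card = n - i := by
  have hn2 : 2 ≤ n := by omega
  have hset : (Finset.univ.filter
        (fun σ : Equiv.Perm (Fin n) =>
          Avoids132 σ ∧ (permDes n σ).card = 1 ∧ permMaj n σ = i))
      = (Finset.Ico 1 (n - i + 1)).image (fun t => P n i t) := by
    ext σ
    simp only [Finset.mem_filter, Finset.mem_univ, true_and, Finset.mem_image,
      Finset.mem_Ico]
    constructor
    · rintro ⟨hav, hcard, hmaj⟩
      have hdes : permDes n σ = {i} := by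
        obtain ⟨a, ha⟩ := Finset.card_eq_one.mp hcard
        rw [permMaj, ha, Finset.sum_singleton, id] at hmaj
        rw [ha, hmaj]
      obtain ⟨t, ht1, ht2, rfl⟩ := forward132 hi σ hav hdes
      exact ⟨t, ⟨ht1, by omega⟩, rfl⟩
    · rintro ⟨t, ⟨ht1, ht2⟩, rfl⟩
      have hle : i + t ≤ n := by omega
      have hd := P_des hi ht1 hle
      refine ⟨P_avoid hle, ?_, ?_⟩
      · rw [hd]; simp
      · rw [permMaj, hd]; simp
  rw [hset]
  rw [Finset.card_image_of_injOn]
  · simp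
  · intro t1 h1 t2 h2 he
    simp only [Finset.mem_coe, Finset.mem_Ico] at h1 h2
    have e1 : ((P n i t1) ⟨0, by omega⟩).1 = fN i t1 0 := P_apply (by omega) _
    have e2 : ((P n i t2) ⟨0, by omega⟩).1 = fN i t2 0 := P_apply (by omega) _
    simp only [] at he
    rw [he] at e1
    rw [e2] at e1
    simp only [fN] at e1
    split_ifs at e1 <;> omega
end

section
/- There is a bijection between 132-avoiding permutations and 231-avoiding permutations of length n preserving the descent set; consequently Σ q^{maj(σ)} t^{des(σ)} over S_n(132) equals the same sum over S_n(231). -/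
open Finset Polynomial
open scoped Classical

/-- The bivariate generating function `∑ q^{maj σ} t^{des σ}` over permutations of length
`n` satisfying `P`, as a polynomial in `t` with coefficients polynomials in `q`. -/
noncomputable def bivarGF (n : ℕ) (P : Equiv.Perm (Fin n) → Prop) :
    Polynomial (Polynomial ℚ) :=
  (Finset.univ.filter P).sum
    (fun σ => Polynomial.C (Polynomial.X ^ permMaj n σ)
      * Polynomial.X ^ (permDes n σ).card)


namespace PP

/-- `i`-th entry, default 0. -/
def nth (l : List ℕ) (i : ℕ) : ℕ := l.getD i 0

/-- `l` is a permutation (as a list) of `0,…,len-1`. -/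
def IsPermL (l : List ℕ) : Prop := l.Perm (List.range l.length)

def Av132L (l : List ℕ) : Prop :=
  ∀ i j k, i < j → j < k → k < l.length → ¬ (nth l i < nth l k ∧ nth l k < nth l j)

def Av231L (l : List ℕ) : Prop :=
  ∀ i j k, i < j → j < k → k < l.length → ¬ (nth l k < nth l i ∧ nth l i < nth l j)

noncomputable def DesL (l : List ℕ) : Finset ℕ :=
  (Finset.Ico 1 l.length).filter (fun i => nth l i < nth l (i-1))

lemma nth_eq (l : List ℕ) {i : ℕ} (h : i < l.length) : nth l i = l[i] :=
  List.getD_eq_getElem l 0 h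

lemma nth_append_left {x y : List ℕ} {i : ℕ} (h : i < x.length) :
    nth (x ++ y) i = nth x i := by
  rw [nth_eq _ (by simp; omega), nth_eq _ h, List.getElem_append_left h]

lemma nth_append_right {x y : List ℕ} {i : ℕ} (h1 : x.length ≤ i)
    (h2 : i < x.length + y.length) :
    nth (x ++ y) i = nth y (i - x.length) := by
  rw [nth_eq _ (by simp; omega), nth_eq _ (by omega), List.getElem_append_right h1]

lemma nth_map (f : ℕ → ℕ) (l : List ℕ) {i : ℕ} (h : i < l.length) :
    nth (l.map f) i = f (nth l i) := by
  rw [nth_eq _ (by simpa using h), nth_eq _ h, List.getElem_map]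

lemma nth_take {l : List ℕ} {k i : ℕ} (h : i < k) (h2 : i < l.length) :
    nth (l.take k) i = nth l i := by
  rw [nth_eq _ (by simp; omega), nth_eq _ h2, List.getElem_take]

lemma nth_drop {l : List ℕ} {d i : ℕ} (h : d + i < l.length) :
    nth (l.drop d) i = nth l (d + i) := by
  rw [nth_eq _ (by simp; omega), nth_eq _ h, List.getElem_drop]

lemma nth_mem {l : List ℕ} {i : ℕ} (h : i < l.length) : nth l i ∈ l := by
  rw [nth_eq _ h]; exact List.getElem_mem h

/-- the recursive bijection from 132-avoiders to 231-avoiders -/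
noncomputable def f (l : List ℕ) : List ℕ :=
  if h : (l.length - 1) ∈ l then
    let k := List.idxOf (l.length - 1) l
    have hk : k < l.length := List.idxOf_lt_length_iff.2 h
    f ((l.take k).map (· - (l.length - 1 - k))) ++
      (l.length - 1) :: (f (l.drop (k+1))).map (· + k)
  else l
termination_by l.length
decreasing_by
  · simp only [List.length_map, List.length_take]; omega
  · simp; omega

/-- the recursive bijection from 231-avoiders to 132-avoiders -/
noncomputable def g (l : List ℕ) : List ℕ :=
  if h : (l.length - 1) ∈ l then
    let k := List.idxOf (l.length - 1) l
    have hk : k < l.length := List.idxOf_lt_length_iff.2 h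
    (g (l.take k)).map (· + (l.length - 1 - k)) ++
      (l.length - 1) :: g ((l.drop (k+1)).map (· - k))
  else l
termination_by l.length
decreasing_by
  · simp only [List.length_map, List.length_take]; omega
  · simp; omega

lemma toFinset_range (n : ℕ) : (List.range n).toFinset = Finset.range n := by
  ext x; simp

lemma isPermL_of (l : List ℕ) (hn : l.Nodup) (hb : ∀ x ∈ l, x < l.length) :
    IsPermL l := by
  apply List.perm_of_nodup_nodup_toFinset_eq hn (List.nodup_range)
  rw [toFinset_range]
  apply Finset.eq_of_subset_of_card_le
  · intro x hx; simp only [List.mem_toFinset] at hx; simpa using hb x hx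
  · rw [List.toFinset_card_of_nodup hn, Finset.card_range]

lemma IsPermL.nodup {l : List ℕ} (h : IsPermL l) : l.Nodup :=
  (h.symm).nodup (List.nodup_range)

lemma IsPermL.mem_iff_lt {l : List ℕ} (h : IsPermL l) {x : ℕ} :
    x ∈ l ↔ x < l.length := by
  rw [List.Perm.mem_iff h, List.mem_range]

lemma IsPermL.nth_lt {l : List ℕ} (h : IsPermL l) {i : ℕ} (hi : i < l.length) :
    nth l i < l.length :=
  h.mem_iff_lt.1 (nth_mem hi)

lemma IsPermL.nth_inj {l : List ℕ} (h : IsPermL l) {i j : ℕ}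
    (hi : i < l.length) (hj : j < l.length) (hij : i ≠ j) : nth l i ≠ nth l j := by
  rw [nth_eq _ hi, nth_eq _ hj]
  intro hc
  exact hij ((h.nodup.getElem_inj_iff).1 hc)

/-- avoidance under maps that preserve order on elements -/
lemma Av132L.map {l : List ℕ} (h : Av132L l) (φ : ℕ → ℕ)
    (hφ : ∀ u ∈ l, ∀ v ∈ l, φ u < φ v → u < v) : Av132L (l.map φ) := by
  intro i j k hij hjk hk hc
  rw [List.length_map] at hk
  have hi : i < l.length := by omega
  have hj : j < l.length := by omega
  rw [nth_map _ _ hi, nth_map _ _ hj, nth_map _ _ hk] at hc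
  exact h i j k hij hjk hk
    ⟨hφ _ (nth_mem hi) _ (nth_mem hk) hc.1, hφ _ (nth_mem hk) _ (nth_mem hj) hc.2⟩

lemma Av231L.map {l : List ℕ} (h : Av231L l) (φ : ℕ → ℕ)
    (hφ : ∀ u ∈ l, ∀ v ∈ l, φ u < φ v → u < v) : Av231L (l.map φ) := by
  intro i j k hij hjk hk hc
  rw [List.length_map] at hk
  have hi : i < l.length := by omega
  have hj : j < l.length := by omega
  rw [nth_map _ _ hi, nth_map _ _ hj, nth_map _ _ hk] at hc
  exact h i j k hij hjk hk
    ⟨hφ _ (nth_mem hk) _ (nth_mem hi) hc.1, hφ _ (nth_mem hi) _ (nth_mem hj) hc.2⟩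

lemma Av132L.take {l : List ℕ} (h : Av132L l) (c : ℕ) : Av132L (l.take c) := by
  intro i j k hij hjk hk hc
  have hkl : k < l.length := by simp at hk; omega
  have hkc : k < c := by simp at hk; omega
  have e1 : nth (l.take c) i = nth l i := nth_take (by omega) (by omega)
  have e2 : nth (l.take c) j = nth l j := nth_take (by omega) (by omega)
  have e3 : nth (l.take c) k = nth l k := nth_take hkc hkl
  rw [e1, e2, e3] at hc
  exact h i j k hij hjk hkl hc

lemma Av231L.take {l : List ℕ} (h : Av231L l) (c : ℕ) : Av231L (l.take c) := by
  intro i j k hij hjk hk hc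
  have hkl : k < l.length := by simp at hk; omega
  have hkc : k < c := by simp at hk; omega
  have e1 : nth (l.take c) i = nth l i := nth_take (by omega) (by omega)
  have e2 : nth (l.take c) j = nth l j := nth_take (by omega) (by omega)
  have e3 : nth (l.take c) k = nth l k := nth_take hkc hkl
  rw [e1, e2, e3] at hc
  exact h i j k hij hjk hkl hc

lemma Av132L.drop {l : List ℕ} (h : Av132L l) (d : ℕ) : Av132L (l.drop d) := by
  intro i j k hij hjk hk hc
  have hkl : d + k < l.length := by simp at hk; omega
  have e1 : nth (l.drop d) i = nth l (d+i) := nth_drop (by omega)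
  have e2 : nth (l.drop d) j = nth l (d+j) := nth_drop (by omega)
  have e3 : nth (l.drop d) k = nth l (d+k) := nth_drop hkl
  rw [e1, e2, e3] at hc
  exact h (d+i) (d+j) (d+k) (by omega) (by omega) hkl hc

lemma Av231L.drop {l : List ℕ} (h : Av231L l) (d : ℕ) : Av231L (l.drop d) := by
  intro i j k hij hjk hk hc
  have hkl : d + k < l.length := by simp at hk; omega
  have e1 : nth (l.drop d) i = nth l (d+i) := nth_drop (by omega)
  have e2 : nth (l.drop d) j = nth l (d+j) := nth_drop (by omega)
  have e3 : nth (l.drop d) k = nth l (d+k) := nth_drop hkl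
  rw [e1, e2, e3] at hc
  exact h (d+i) (d+j) (d+k) (by omega) (by omega) hkl hc

end PP

namespace PP

lemma mem_DesL {l : List ℕ} {i : ℕ} :
    i ∈ DesL l ↔ 1 ≤ i ∧ i < l.length ∧ nth l i < nth l (i-1) := by
  simp [DesL, Finset.mem_filter, Finset.mem_Ico, and_assoc]

lemma DesL_map {l : List ℕ} (φ : ℕ → ℕ)
    (hφ : ∀ u ∈ l, ∀ v ∈ l, (φ u < φ v ↔ u < v)) : DesL (l.map φ) = DesL l := by
  ext i
  simp only [mem_DesL, List.length_map]
  constructor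
  · rintro ⟨h1, h2, h3⟩
    refine ⟨h1, h2, ?_⟩
    rw [nth_map _ _ h2, nth_map _ _ (by omega)] at h3
    exact (hφ _ (nth_mem h2) _ (nth_mem (by omega))).1 h3
  · rintro ⟨h1, h2, h3⟩
    refine ⟨h1, h2, ?_⟩
    rw [nth_map _ _ h2, nth_map _ _ (show i-1 < l.length by omega)]
    exact (hφ _ (nth_mem h2) _ (nth_mem (by omega))).2 h3

lemma des_decomp (x y : List ℕ) (m : ℕ) (hx : ∀ v ∈ x, v < m) (hy : ∀ v ∈ y, v < m) :
    DesL (x ++ m :: y) =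
      (DesL x ∪ (if y.length = 0 then (∅ : Finset ℕ) else {x.length + 1})) ∪
        (DesL y).image (· + (x.length + 1)) := by
  have hlen : (x ++ m :: y).length = x.length + y.length + 1 := by simp; omega
  have hnth : ∀ p, p < x.length + y.length + 1 →
      nth (x ++ m :: y) p =
        if h : p < x.length then nth x p
        else if p = x.length then m else nth y (p - x.length - 1) := by
    intro p hp
    by_cases h1 : p < x.length
    · rw [nth_append_left h1, dif_pos h1]
    · rw [dif_neg h1]
      by_cases h2 : p = x.length
      · subst h2
        rw [if_pos rfl, nth_append_right (le_refl _) (by simp)]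
        simp [nth]
      · rw [if_neg h2]
        have e : x ++ m :: y = (x ++ [m]) ++ y := by simp
        rw [e, nth_append_right (by simp; omega) (by simp; omega)]
        congr 1
        simp only [List.length_append, List.length_singleton]
        omega
  ext i
  simp only [mem_DesL, hlen, Finset.mem_union, Finset.mem_image, Finset.mem_singleton]
  constructor
  · rintro ⟨h1, h2, h3⟩
    rw [hnth i (by omega), hnth (i-1) (by omega)] at h3
    by_cases c1 : i < x.length
    · left; left
      rw [dif_pos c1, dif_pos (by omega)] at h3
      exact ⟨h1, c1, h3⟩
    · by_cases c2 : i = x.length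
      · exfalso
        rw [dif_neg c1, if_pos c2, dif_pos (by omega)] at h3
        have := hx _ (nth_mem (show i - 1 < x.length by omega))
        omega
      · by_cases c3 : i = x.length + 1
        · left; right
          have : y.length ≠ 0 := by omega
          simp [this, c3]
        · right
          refine ⟨i - x.length - 1, ?_, by omega⟩
          rw [dif_neg c1, if_neg c2, dif_neg (by omega), if_neg (by omega)] at h3
          have : i - 1 - x.length - 1 = i - x.length - 1 - 1 := by omega
          rw [this] at h3
          exact ⟨by omega, by omega, h3⟩
  · rintro (h | ⟨j, hj, rfl⟩)
    · rcases h with h | h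
      · obtain ⟨h1, h2, h3⟩ := h
        refine ⟨h1, by omega, ?_⟩
        rw [hnth i (by omega), hnth (i-1) (by omega), dif_pos h2, dif_pos (by omega)]
        exact h3
      · rcases Nat.eq_zero_or_pos y.length with h0 | h0
        · rw [if_pos h0] at h; simp at h
        · rw [if_neg (by omega), Finset.mem_singleton] at h
          subst h
          refine ⟨by omega, by omega, ?_⟩
          rw [hnth _ (by omega), hnth _ (by omega), dif_neg (by omega),
            if_neg (by omega), dif_neg (by omega), if_pos (by omega)]
          have e0 : x.length + 1 - x.length - 1 = 0 := by omega
          rw [e0]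
          exact hy _ (nth_mem h0)
    · obtain ⟨h1, h2, h3⟩ := hj
      refine ⟨by omega, by omega, ?_⟩
      rw [hnth _ (by omega), hnth _ (by omega), dif_neg (by omega), if_neg (by omega),
        dif_neg (by omega), if_neg (by omega)]
      have e1 : j + (x.length + 1) - x.length - 1 = j := by omega
      have e2 : j + (x.length + 1) - 1 - x.length - 1 = j - 1 := by omega
      rw [e1, e2]
      exact h3

end PP

namespace PP

lemma nth_cat (x y : List ℕ) (m : ℕ) (p : ℕ) :
    nth (x ++ m :: y) p =
      if p < x.length then nth x p
      else if p = x.length then m else nth y (p - x.length - 1) := by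
  by_cases h1 : p < x.length
  · rw [nth_append_left h1, if_pos h1]
  · rw [if_neg h1]
    by_cases h2 : p = x.length
    · subst h2
      rw [if_pos rfl, nth_append_right (le_refl _) (by simp)]
      simp [nth]
    · rw [if_neg h2]
      by_cases h3 : p < x.length + y.length + 1
      · have e : x ++ m :: y = (x ++ [m]) ++ y := by simp
        rw [e, nth_append_right (by simp; omega) (by simp; omega)]
        congr 1
        simp only [List.length_append, List.length_singleton]
        omega
      · have e1 : nth (x ++ m :: y) p = 0 := by
          unfold nth
          apply List.getD_eq_default
          simp; omega
        have e2 : nth y (p - x.length - 1) = 0 := by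
          unfold nth
          apply List.getD_eq_default
          omega
        rw [e1, e2]

lemma av231_build {x y : List ℕ} {m : ℕ} (hxm : ∀ u ∈ x, u < m) (hym : ∀ v ∈ y, v < m)
    (hxy : ∀ u ∈ x, ∀ v ∈ y, u < v) (hxa : Av231L x) (hya : Av231L y) :
    Av231L (x ++ m :: y) := by
  intro i j k hij hjk hk hc
  rw [List.length_append, List.length_cons] at hk
  rw [nth_cat, nth_cat, nth_cat] at hc
  obtain ⟨c1, c2⟩ := hc
  by_cases cj : j < x.length
  · have ci : i < x.length := by omega
    rw [if_pos ci, if_pos cj] at c2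
    by_cases ck : k < x.length
    · rw [if_pos ck, if_pos ci] at c1
      exact hxa i j k hij hjk ck ⟨c1, c2⟩
    · by_cases ck2 : k = x.length
      · rw [if_neg ck, if_pos ck2, if_pos ci] at c1
        have := hxm _ (nth_mem ci); omega
      · rw [if_neg ck, if_neg ck2, if_pos ci] at c1
        have := hxy _ (nth_mem ci) _
          (nth_mem (show k - x.length - 1 < y.length by omega))
        omega
  · by_cases cj2 : j = x.length
    · have ci : i < x.length := by omega
      rw [if_neg (show ¬ k < x.length by omega),
        if_neg (show ¬ k = x.length by omega), if_pos ci] at c1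
      have := hxy _ (nth_mem ci) _
        (nth_mem (show k - x.length - 1 < y.length by omega))
      omega
    · have hjy : j - x.length - 1 < y.length := by omega
      have hky : k - x.length - 1 < y.length := by omega
      rw [if_neg cj, if_neg cj2] at c2
      by_cases ci : i < x.length
      · rw [if_neg (show ¬ k < x.length by omega),
          if_neg (show ¬ k = x.length by omega), if_pos ci] at c1
        have := hxy _ (nth_mem ci) _ (nth_mem hky); omega
      · by_cases ci2 : i = x.length
        · rw [if_neg ci, if_pos ci2] at c2
          have := hym _ (nth_mem hjy); omega
        · rw [if_neg (show ¬ k < x.length by omega),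
            if_neg (show ¬ k = x.length by omega), if_neg ci, if_neg ci2] at c1
          rw [if_neg ci, if_neg ci2] at c2
          exact hya _ _ _ (show i - x.length - 1 < j - x.length - 1 by omega)
            (show j - x.length - 1 < k - x.length - 1 by omega) hky ⟨c1, c2⟩

lemma av132_build {x y : List ℕ} {m : ℕ} (hxm : ∀ u ∈ x, u < m) (hym : ∀ v ∈ y, v < m)
    (hxy : ∀ u ∈ x, ∀ v ∈ y, v < u) (hxa : Av132L x) (hya : Av132L y) :
    Av132L (x ++ m :: y) := by
  intro i j k hij hjk hk hc
  rw [List.length_append, List.length_cons] at hk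
  rw [nth_cat, nth_cat, nth_cat] at hc
  obtain ⟨c1, c2⟩ := hc
  by_cases cj : j < x.length
  · have ci : i < x.length := by omega
    by_cases ck : k < x.length
    · rw [if_pos ci, if_pos ck] at c1
      rw [if_pos ck, if_pos cj] at c2
      exact hxa i j k hij hjk ck ⟨c1, c2⟩
    · by_cases ck2 : k = x.length
      · rw [if_neg ck, if_pos ck2, if_pos cj] at c2
        have := hxm _ (nth_mem cj); omega
      · rw [if_pos ci, if_neg ck, if_neg ck2] at c1
        have := hxy _ (nth_mem ci) _
          (nth_mem (show k - x.length - 1 < y.length by omega))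
        omega
  · by_cases cj2 : j = x.length
    · have ci : i < x.length := by omega
      rw [if_pos ci, if_neg (show ¬ k < x.length by omega),
        if_neg (show ¬ k = x.length by omega)] at c1
      have := hxy _ (nth_mem ci) _
        (nth_mem (show k - x.length - 1 < y.length by omega))
      omega
    · have hjy : j - x.length - 1 < y.length := by omega
      have hky : k - x.length - 1 < y.length := by omega
      by_cases ci : i < x.length
      · rw [if_pos ci, if_neg (show ¬ k < x.length by omega),
          if_neg (show ¬ k = x.length by omega)] at c1
        have := hxy _ (nth_mem ci) _ (nth_mem hky); omega
      · by_cases ci2 : i = x.length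
        · rw [if_neg ci, if_pos ci2, if_neg (show ¬ k < x.length by omega),
            if_neg (show ¬ k = x.length by omega)] at c1
          have := hym _ (nth_mem hky); omega
        · rw [if_neg ci, if_neg ci2, if_neg (show ¬ k < x.length by omega),
            if_neg (show ¬ k = x.length by omega)] at c1
          rw [if_neg (show ¬ k < x.length by omega),
            if_neg (show ¬ k = x.length by omega), if_neg cj, if_neg cj2] at c2
          exact hya _ _ _ (show i - x.length - 1 < j - x.length - 1 by omega)
            (show j - x.length - 1 < k - x.length - 1 by omega) hky ⟨c1, c2⟩

end PP

namespace PP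

lemma split_at_max {l : List ℕ} (hp : IsPermL l) (h0 : 0 < l.length) :
    (l.length - 1) ∈ l ∧ List.idxOf (l.length - 1) l < l.length ∧
    l = l.take (List.idxOf (l.length - 1) l) ++ (l.length - 1) ::
      l.drop (List.idxOf (l.length - 1) l + 1) ∧
    nth l (List.idxOf (l.length - 1) l) = l.length - 1 := by
  have hm : (l.length - 1) ∈ l := hp.mem_iff_lt.2 (by omega)
  have hk : List.idxOf (l.length - 1) l < l.length := List.idxOf_lt_length_iff.2 hm
  have hnth : nth l (List.idxOf (l.length - 1) l) = l.length - 1 := by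
    rw [nth_eq _ hk]; exact List.getElem_idxOf hk
  refine ⟨hm, hk, ?_, hnth⟩
  conv_lhs => rw [← List.take_append_drop (List.idxOf (l.length - 1) l) l]
  rw [List.drop_eq_getElem_cons hk, List.getElem_idxOf hk]

/-- structural facts about a 132-avoiding permutation list, split at its max. -/
lemma struct132 {l : List ℕ} (hp : IsPermL l) (ha : Av132L l) (h0 : 0 < l.length)
    (k : ℕ) (hk : k = List.idxOf (l.length - 1) l) :
    k < l.length ∧
    (l.take k).length = k ∧ (l.drop (k+1)).length = l.length - 1 - k ∧
    (∀ y ∈ l.drop (k+1), y < l.length - 1 - k) ∧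
    (∀ x ∈ l.take k, l.length - 1 - k ≤ x ∧ x < l.length - 1) := by
  subst hk
  obtain ⟨hm, hk, hsplit, hnth⟩ := split_at_max hp h0
  set n := l.length with hn
  set k := List.idxOf (n - 1) l with hkdef
  have hlt : (l.take k).length = k := by rw [List.length_take]; omega
  have hld : (l.drop (k+1)).length = n - 1 - k := by rw [List.length_drop]; omega
  -- index version of the key comparison
  have key : ∀ i j, i < k → k < j → j < n → nth l j < nth l i := by
    intro i j hi hj hjn
    have h1 : nth l j < n := hp.nth_lt hjn
    have h2 : nth l j ≠ n - 1 := by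
      rw [← hnth]; exact hp.nth_inj hjn (by omega) (by omega)
    have h3 : nth l j < n - 1 := by omega
    have h4 := ha i k j hi hj hjn
    rw [hnth] at h4
    have h5 : nth l i ≠ nth l j := hp.nth_inj (by omega) hjn (by omega)
    omega
  -- membership characterizations
  have hmema : ∀ x ∈ l.take k, ∃ i, i < k ∧ nth l i = x := by
    intro x hx
    obtain ⟨i, hi, hix⟩ := List.mem_iff_getElem.1 hx
    rw [hlt] at hi
    refine ⟨i, hi, ?_⟩
    rw [nth_eq l (show i < l.length by omega), ← hix]
    exact (List.getElem_take).symm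
  have hmemb : ∀ y ∈ l.drop (k+1), ∃ j, k < j ∧ j < n ∧ nth l j = y := by
    intro y hy
    obtain ⟨j, hj, hjy⟩ := List.mem_iff_getElem.1 hy
    rw [hld] at hj
    refine ⟨k + 1 + j, by omega, by omega, ?_⟩
    rw [nth_eq l (show k + 1 + j < l.length by omega), ← hjy]
    exact (List.getElem_drop).symm
  have hmemb' : ∀ j, k < j → j < n → nth l j ∈ l.drop (k+1) := by
    intro j hj hjn
    apply List.mem_iff_getElem.2
    refine ⟨j - k - 1, by rw [hld]; omega, ?_⟩
    have : (l.drop (k+1))[j - k - 1]'(by rw [hld]; omega) = l[k + 1 + (j - k - 1)]'(by omega) :=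
      List.getElem_drop
    rw [this, ← nth_eq _ (show k + 1 + (j - k - 1) < n by omega)]
    congr 1
    omega
  have hbnodup : (l.drop (k+1)).Nodup := (List.drop_sublist _ _).nodup hp.nodup
  -- all entries of the right block are small
  have hbsmall : ∀ y ∈ l.drop (k+1), y < n - 1 - k := by
    intro y hy
    by_contra hc
    obtain ⟨j, hj1, hj2, hj3⟩ := hmemb y hy
    have hym : y < n - 1 := by
      have h1 : y < n := by rw [← hj3]; exact hp.nth_lt hj2
      have h2 : y ≠ n - 1 := by
        rw [← hj3, ← hnth]; exact hp.nth_inj hj2 (by omega) (by omega)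
      omega
    have hsub : Finset.range (y + 1) ⊆ (l.drop (k+1)).toFinset := by
      intro v hv
      rw [Finset.mem_range] at hv
      have hvl : v ∈ l := hp.mem_iff_lt.2 (by omega)
      obtain ⟨p, hpn, hpv⟩ := List.mem_iff_getElem.1 hvl
      have hpv' : nth l p = v := by rw [nth_eq _ hpn]; exact hpv
      have hpk : p ≠ k := by
        intro hc2; rw [hc2, hnth] at hpv'; omega
      rcases lt_or_gt_of_ne hpk with hpk' | hpk'
      · exfalso
        have := key p j hpk' hj1 hj2
        omega
      · rw [List.mem_toFinset, ← hpv']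
        exact hmemb' p hpk' hpn
    have hcard := Finset.card_le_card hsub
    rw [Finset.card_range, List.toFinset_card_of_nodup hbnodup, hld] at hcard
    omega
  refine ⟨hk, hlt, hld, hbsmall, ?_⟩
  -- entries of the left block
  have hbfin : (l.drop (k+1)).toFinset = Finset.range (n - 1 - k) := by
    apply Finset.eq_of_subset_of_card_le
    · intro v hv
      rw [List.mem_toFinset] at hv
      rw [Finset.mem_range]
      exact hbsmall v hv
    · rw [Finset.card_range, List.toFinset_card_of_nodup hbnodup, hld]
  intro x hx
  obtain ⟨i, hi, hix⟩ := hmema x hx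
  have hx1 : x < n := by rw [← hix]; exact hp.nth_lt (by omega)
  have hx2 : x ≠ n - 1 := by
    rw [← hix, ← hnth]; exact hp.nth_inj (by omega) (by omega) (by omega)
  refine ⟨?_, by omega⟩
  by_contra hc
  have hxb : x ∈ l.drop (k+1) := by
    rw [← List.mem_toFinset, hbfin, Finset.mem_range]; omega
  have hdisj : (l.take k).Disjoint ((n-1) :: l.drop (k+1)) := by
    apply List.disjoint_of_nodup_append
    rw [← hsplit]; exact hp.nodup
  exact hdisj hx (List.mem_cons_of_mem _ hxb)

/-- structural facts about a 231-avoiding permutation list, split at its max. -/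
lemma struct231 {l : List ℕ} (hp : IsPermL l) (ha : Av231L l) (h0 : 0 < l.length)
    (k : ℕ) (hk : k = List.idxOf (l.length - 1) l) :
    k < l.length ∧
    (l.take k).length = k ∧ (l.drop (k+1)).length = l.length - 1 - k ∧
    (∀ x ∈ l.take k, x < k) ∧
    (∀ y ∈ l.drop (k+1), k ≤ y ∧ y < l.length - 1) := by
  subst hk
  obtain ⟨hm, hk, hsplit, hnth⟩ := split_at_max hp h0
  set n := l.length with hn
  set k := List.idxOf (n - 1) l with hkdef
  have hlt : (l.take k).length = k := by rw [List.length_take]; omega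
  have hld : (l.drop (k+1)).length = n - 1 - k := by rw [List.length_drop]; omega
  have key : ∀ i j, i < k → k < j → j < n → nth l i < nth l j := by
    intro i j hi hj hjn
    have h1 : nth l j < n := hp.nth_lt hjn
    have h2 : nth l j ≠ n - 1 := by
      rw [← hnth]; exact hp.nth_inj hjn (by omega) (by omega)
    have h3 : nth l j < n - 1 := by omega
    have h4 := ha i k j hi hj hjn
    rw [hnth] at h4
    have h5 : nth l i ≠ nth l j := hp.nth_inj (by omega) hjn (by omega)
    have h6 : nth l i < n := hp.nth_lt (by omega)
    have h7 : nth l i ≠ n - 1 := by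
      rw [← hnth]; exact hp.nth_inj (by omega) (by omega) (by omega)
    omega
  have hmema : ∀ x ∈ l.take k, ∃ i, i < k ∧ nth l i = x := by
    intro x hx
    obtain ⟨i, hi, hix⟩ := List.mem_iff_getElem.1 hx
    rw [hlt] at hi
    refine ⟨i, hi, ?_⟩
    rw [nth_eq l (show i < l.length by omega), ← hix]
    exact (List.getElem_take).symm
  have hmemb : ∀ y ∈ l.drop (k+1), ∃ j, k < j ∧ j < n ∧ nth l j = y := by
    intro y hy
    obtain ⟨j, hj, hjy⟩ := List.mem_iff_getElem.1 hy
    rw [hld] at hj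
    refine ⟨k + 1 + j, by omega, by omega, ?_⟩
    rw [nth_eq l (show k + 1 + j < l.length by omega), ← hjy]
    exact (List.getElem_drop).symm
  have hmema' : ∀ i, i < k → nth l i ∈ l.take k := by
    intro i hi
    apply List.mem_iff_getElem.2
    refine ⟨i, by rw [hlt]; omega, ?_⟩
    have : (l.take k)[i]'(by rw [hlt]; omega) = l[i]'(by omega) := List.getElem_take
    rw [this, ← nth_eq _ (show i < n by omega)]
  have hanodup : (l.take k).Nodup := (List.take_sublist _ _).nodup hp.nodup
  have hasmall : ∀ x ∈ l.take k, x < k := by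
    intro x hx
    by_contra hc
    obtain ⟨i, hi1, hi2⟩ := hmema x hx
    have hsub : Finset.range (x + 1) ⊆ (l.take k).toFinset := by
      intro v hv
      rw [Finset.mem_range] at hv
      have hxm : x < n - 1 := by
        have h1 : x < n := by rw [← hi2]; exact hp.nth_lt (by omega)
        have h2 : x ≠ n - 1 := by
          rw [← hi2, ← hnth]; exact hp.nth_inj (by omega) (by omega) (by omega)
        omega
      have hvl : v ∈ l := hp.mem_iff_lt.2 (by omega)
      obtain ⟨p, hpn, hpv⟩ := List.mem_iff_getElem.1 hvl
      have hpv' : nth l p = v := by rw [nth_eq _ hpn]; exact hpv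
      have hpk : p ≠ k := by
        intro hc2; rw [hc2, hnth] at hpv'; omega
      rcases lt_or_gt_of_ne hpk with hpk' | hpk'
      · rw [List.mem_toFinset, ← hpv']
        exact hmema' p hpk'
      · exfalso
        have := key i p hi1 hpk' hpn
        omega
    have hcard := Finset.card_le_card hsub
    rw [Finset.card_range, List.toFinset_card_of_nodup hanodup, hlt] at hcard
    omega
  refine ⟨hk, hlt, hld, hasmall, ?_⟩
  have hafin : (l.take k).toFinset = Finset.range k := by
    apply Finset.eq_of_subset_of_card_le
    · intro v hv
      rw [List.mem_toFinset] at hv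
      rw [Finset.mem_range]
      exact hasmall v hv
    · rw [Finset.card_range, List.toFinset_card_of_nodup hanodup, hlt]
  intro y hy
  obtain ⟨j, hj1, hj2, hj3⟩ := hmemb y hy
  have hy1 : y < n := by rw [← hj3]; exact hp.nth_lt hj2
  have hy2 : y ≠ n - 1 := by
    rw [← hj3, ← hnth]; exact hp.nth_inj hj2 (by omega) (by omega)
  refine ⟨?_, by omega⟩
  by_contra hc
  have hya : y ∈ l.take k := by
    rw [← List.mem_toFinset, hafin, Finset.mem_range]; omega
  have hdisj : (l.take k).Disjoint ((n-1) :: l.drop (k+1)) := by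
    apply List.disjoint_of_nodup_append
    rw [← hsplit]; exact hp.nodup
  exact hdisj hya (List.mem_cons_of_mem _ hy)

end PP

namespace PP

lemma f_nil : f [] = [] := by rw [f]; simp

lemma g_nil : g [] = [] := by rw [g]; simp

lemma f_eq {l : List ℕ} (h : (l.length - 1) ∈ l) {k : ℕ}
    (hk : k = List.idxOf (l.length - 1) l) :
    f l = f ((l.take k).map (· - (l.length - 1 - k))) ++
      (l.length - 1) :: (f (l.drop (k+1))).map (· + k) := by
  subst hk
  rw [f, dif_pos h]

lemma g_eq {l : List ℕ} (h : (l.length - 1) ∈ l) {k : ℕ}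
    (hk : k = List.idxOf (l.length - 1) l) :
    g l = (g (l.take k)).map (· + (l.length - 1 - k)) ++
      (l.length - 1) :: g ((l.drop (k+1)).map (· - k)) := by
  subst hk
  rw [g, dif_pos h]

lemma indexOf_concat {x y : List ℕ} {m : ℕ} (hm : m ∉ x) :
    List.idxOf m (x ++ m :: y) = x.length := by
  induction x with
  | nil => simp
  | cons hd tl ih =>
    simp only [List.mem_cons, not_or] at hm
    rw [List.cons_append, List.idxOf_cons_ne _ (Ne.symm hm.1)]
    simp only [List.length_cons]
    rw [ih hm.2]

lemma av132_nil : Av132L [] := by intro i j k _ _ hk; simp at hk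
lemma av231_nil : Av231L [] := by intro i j k _ _ hk; simp at hk
lemma isPermL_nil : IsPermL [] := by simp [IsPermL]

theorem main_f : ∀ N, ∀ l : List ℕ, l.length ≤ N → IsPermL l → Av132L l →
    (f l).length = l.length ∧ IsPermL (f l) ∧ Av231L (f l) ∧
      DesL (f l) = DesL l ∧ g (f l) = l := by
  intro N
  induction N with
  | zero =>
    intro l hl _ _
    have : l = [] := List.length_eq_zero_iff.1 (by omega)
    subst this
    exact ⟨by rw [f_nil], by rw [f_nil]; exact isPermL_nil, by rw [f_nil]; exact av231_nil,
      by rw [f_nil], by rw [f_nil, g_nil]⟩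
  | succ N IH =>
    intro l hl hp ha
    by_cases h0 : l.length = 0
    · have : l = [] := List.length_eq_zero_iff.1 h0
      subst this
      exact ⟨by rw [f_nil], by rw [f_nil]; exact isPermL_nil, by rw [f_nil]; exact av231_nil,
        by rw [f_nil], by rw [f_nil, g_nil]⟩
    · obtain ⟨hm, hkl, hsplit, hnth⟩ := split_at_max hp (by omega)
      set k := List.idxOf (l.length - 1) l with hkdef
      obtain ⟨-, hlt, hld, hbsmall, habig⟩ := struct132 hp ha (by omega) k hkdef
      set a := l.take k with hadef
      set b := l.drop (k+1) with hbdef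
      set A := a.map (· - (l.length - 1 - k)) with hAdef
      -- basic facts about the blocks
      have hanodup : a.Nodup := (List.take_sublist _ _).nodup hp.nodup
      have hAlen : A.length = k := by rw [hAdef, List.length_map, hlt]
      have hPA : IsPermL A := by
        apply isPermL_of
        · apply List.Nodup.map_on _ hanodup
          intro u hu v hv huv
          have h1 := habig u hu
          have h2 := habig v hv
          omega
        · intro z hz
          rw [hAlen]
          obtain ⟨x, hx, rfl⟩ := List.mem_map.1 hz
          have := habig x hx
          omega
      have hAa : Av132L A := by
        apply (ha.take k).map
        intro u hu v hv huv
        have h1 := habig u hu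
        have h2 := habig v hv
        omega
      have hPb : IsPermL b := by
        apply isPermL_of
        · exact (List.drop_sublist _ _).nodup hp.nodup
        · intro y hy
          rw [hld]
          exact hbsmall y hy
      have hba : Av132L b := ha.drop (k+1)
      obtain ⟨len1, perm1, av1, des1, ginv1⟩ := IH A (by omega) hPA hAa
      obtain ⟨len2, perm2, av2, des2, ginv2⟩ := IH b (by rw [hld]; omega) hPb hba
      have eFA : (f A).length = k := by rw [len1, hAlen]
      have eFB : ((f b).map (· + k)).length = l.length - 1 - k := by
        rw [List.length_map, len2, hld]
      -- value bounds on the image blocks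
      have hFAv : ∀ v ∈ f A, v < k := by
        intro v hv
        have := perm1.mem_iff_lt.1 hv
        omega
      have hFBv : ∀ v ∈ (f b).map (· + k), k ≤ v ∧ v < l.length - 1 := by
        intro v hv
        obtain ⟨w, hw, rfl⟩ := List.mem_map.1 hv
        have := perm2.mem_iff_lt.1 hw
        rw [len2, hld] at this
        omega
      have flen : (f l).length = l.length := by
        rw [f_eq hm hkdef, List.length_append, List.length_cons, eFA, List.length_map,
          len2, hld]
        omega
      refine ⟨flen, ?_, ?_, ?_, ?_⟩
      · -- IsPermL (f l)
        rw [IsPermL, flen, f_eq hm hkdef]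
        have p1 : List.Perm (f A ++ (l.length - 1) :: (f b).map (· + k))
            ((l.length - 1) :: (f A ++ (f b).map (· + k))) := List.perm_middle
        have pA : List.Perm (f A) (List.range k) := by
          have h1 := perm1
          rwa [IsPermL, len1, hAlen] at h1
        have pB : List.Perm ((f b).map (· + k))
            ((List.range (l.length - 1 - k)).map (fun x => k + x)) := by
          have h2 := perm2
          rw [IsPermL, len2, hld] at h2
          refine (h2.map (· + k)).trans ?_
          have e : (List.range (l.length - 1 - k)).map (fun x => x + k)
              = (List.range (l.length - 1 - k)).map (fun x => k + x) :=
            List.map_congr_left (fun x _ => Nat.add_comm x k)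
          rw [e]
        have p2 : List.Perm (f A ++ (f b).map (· + k)) (List.range (l.length - 1)) := by
          have h3 := pA.append pB
          rwa [← List.range_add, show k + (l.length - 1 - k) = l.length - 1 by omega] at h3
        have p3 : List.Perm ((l.length - 1) :: List.range (l.length - 1))
            (List.range l.length) := by
          have e : List.range l.length = List.range (l.length - 1) ++ (l.length - 1) :: [] := by
            conv_lhs => rw [show l.length = (l.length - 1) + 1 by omega]
            rw [List.range_succ]
          rw [e]
          exact (List.perm_middle.trans (by rw [List.append_nil])).symm
        exact (p1.trans ((p2.cons _))).trans p3
      · -- Av231L (f l)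
        rw [f_eq hm hkdef]
        apply av231_build
        · intro u hu; have := hFAv u hu; omega
        · intro v hv; exact (hFBv v hv).2
        · intro u hu v hv
          have h1 := hFAv u hu
          have h2 := (hFBv v hv).1
          omega
        · exact av1
        · exact av2.map _ (fun u _ v _ h => by omega)
      · -- DesL
        rw [f_eq hm hkdef]
        conv_rhs => rw [hsplit]
        rw [des_decomp _ _ _ (fun u hu => by have := hFAv u hu; omega)
            (fun v hv => (hFBv v hv).2),
          des_decomp _ _ _ (fun u hu => by have := (habig u hu).2; omega)
            (fun v hv => by have := hbsmall v hv; omega)]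
        have d1 : DesL (f A) = DesL a := by
          rw [des1, hAdef]
          apply DesL_map
          intro u hu v hv
          have h1 := habig u hu
          have h2 := habig v hv
          omega
        have d2 : DesL ((f b).map (· + k)) = DesL b := by
          rw [DesL_map _ (fun u _ v _ => by omega), des2]
        rw [d1, d2, eFA, eFB, hlt, hld]
      · -- g (f l) = l
        have hmem : (f l).length - 1 ∈ f l := by
          rw [flen, f_eq hm hkdef]
          exact List.mem_append.2 (Or.inr (List.mem_cons_self))
        have hidx : List.idxOf ((f l).length - 1) (f l) = k := by
          rw [flen, f_eq hm hkdef]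
          rw [indexOf_concat (fun hc => by have := hFAv _ hc; omega), eFA]
        rw [g_eq hmem hidx.symm]
        have e1 : (f l).take k = f A := by
          rw [f_eq hm hkdef]
          exact List.take_left' eFA
        have e2 : (f l).drop (k + 1) = (f b).map (· + k) := by
          rw [f_eq hm hkdef]
          have : f A ++ (l.length - 1) :: (f b).map (· + k)
              = (f A ++ [l.length - 1]) ++ (f b).map (· + k) := by simp
          rw [this]
          exact List.drop_left' (by rw [List.length_append, eFA]; simp)
        rw [e1, e2, ginv1]
        have e3 : ((f b).map (· + k)).map (· - k) = f b := by
          rw [List.map_map]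
          have : ∀ x ∈ f b, ((· - k) ∘ (· + k)) x = id x := fun x _ => by simp
          rw [List.map_congr_left this, List.map_id]
        rw [e3, ginv2]
        have e4 : A.map (· + (l.length - 1 - k)) = a := by
          rw [hAdef, List.map_map]
          have : ∀ x ∈ a, ((· + (l.length - 1 - k)) ∘ (· - (l.length - 1 - k))) x = id x := by
            intro x hx
            have := habig x hx
            simp only [Function.comp_apply, id_eq]
            omega
          rw [List.map_congr_left this, List.map_id]
        rw [flen, e4]
        exact hsplit.symm

end PP

namespace PP

theorem main_g : ∀ N, ∀ l : List ℕ, l.length ≤ N → IsPermL l → Av231L l →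
    (g l).length = l.length ∧ IsPermL (g l) ∧ Av132L (g l) ∧
      DesL (g l) = DesL l ∧ f (g l) = l := by
  intro N
  induction N with
  | zero =>
    intro l hl _ _
    have : l = [] := List.length_eq_zero_iff.1 (by omega)
    subst this
    exact ⟨by rw [g_nil], by rw [g_nil]; exact isPermL_nil, by rw [g_nil]; exact av132_nil,
      by rw [g_nil], by rw [g_nil, f_nil]⟩
  | succ N IH =>
    intro l hl hp ha
    by_cases h0 : l.length = 0
    · have : l = [] := List.length_eq_zero_iff.1 h0
      subst this
      exact ⟨by rw [g_nil], by rw [g_nil]; exact isPermL_nil, by rw [g_nil]; exact av132_nil,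
        by rw [g_nil], by rw [g_nil, f_nil]⟩
    · obtain ⟨hm, hkl, hsplit, hnth⟩ := split_at_max hp (by omega)
      set k := List.idxOf (l.length - 1) l with hkdef
      obtain ⟨-, hlt, hld, hasmall, hbbig⟩ := struct231 hp ha (by omega) k hkdef
      set a := l.take k with hadef
      set b := l.drop (k+1) with hbdef
      set B := b.map (· - k) with hBdef
      have hbnodup : b.Nodup := (List.drop_sublist _ _).nodup hp.nodup
      have hBlen : B.length = l.length - 1 - k := by rw [hBdef, List.length_map, hld]
      have hPa : IsPermL a := by
        apply isPermL_of
        · exact (List.take_sublist _ _).nodup hp.nodup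
        · intro x hx
          rw [hlt]
          exact hasmall x hx
      have hPB : IsPermL B := by
        apply isPermL_of
        · apply List.Nodup.map_on _ hbnodup
          intro u hu v hv huv
          have h1 := hbbig u hu
          have h2 := hbbig v hv
          omega
        · intro z hz
          rw [hBlen]
          obtain ⟨y, hy, rfl⟩ := List.mem_map.1 hz
          have := hbbig y hy
          omega
      have haa : Av231L a := ha.take k
      have hBa : Av231L B := by
        apply (ha.drop (k+1)).map
        intro u hu v hv huv
        have h1 := hbbig u hu
        have h2 := hbbig v hv
        omega
      obtain ⟨len1, perm1, av1, des1, finv1⟩ := IH a (by rw [hlt]; omega) hPa haa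
      obtain ⟨len2, perm2, av2, des2, finv2⟩ := IH B (by rw [hBlen]; omega) hPB hBa
      have eGA : ((g a).map (· + (l.length - 1 - k))).length = k := by
        rw [List.length_map, len1, hlt]
      have eGB : (g B).length = l.length - 1 - k := by rw [len2, hBlen]
      have hGAv : ∀ v ∈ (g a).map (· + (l.length - 1 - k)),
          l.length - 1 - k ≤ v ∧ v < l.length - 1 := by
        intro v hv
        obtain ⟨w, hw, rfl⟩ := List.mem_map.1 hv
        have := perm1.mem_iff_lt.1 hw
        rw [len1, hlt] at this
        omega
      have hGBv : ∀ v ∈ g B, v < l.length - 1 - k := by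
        intro v hv
        have := perm2.mem_iff_lt.1 hv
        rw [eGB] at this
        exact this
      have glen : (g l).length = l.length := by
        rw [g_eq hm hkdef, List.length_append, List.length_cons, eGA, eGB]
        omega
      refine ⟨glen, ?_, ?_, ?_, ?_⟩
      · -- IsPermL (g l)
        rw [IsPermL, glen, g_eq hm hkdef]
        have p1 : List.Perm ((g a).map (· + (l.length - 1 - k)) ++ (l.length - 1) :: g B)
            ((l.length - 1) :: ((g a).map (· + (l.length - 1 - k)) ++ g B)) :=
          List.perm_middle
        have pA : List.Perm ((g a).map (· + (l.length - 1 - k)))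
            ((List.range k).map (fun x => (l.length - 1 - k) + x)) := by
          have h1 := perm1
          rw [IsPermL, len1, hlt] at h1
          refine (h1.map (· + (l.length - 1 - k))).trans ?_
          have e : (List.range k).map (fun x => x + (l.length - 1 - k))
              = (List.range k).map (fun x => (l.length - 1 - k) + x) :=
            List.map_congr_left (fun x _ => Nat.add_comm x _)
          rw [e]
        have pB : List.Perm (g B) (List.range (l.length - 1 - k)) := by
          have h2 := perm2
          rwa [IsPermL, eGB] at h2
        have p2 : List.Perm ((g a).map (· + (l.length - 1 - k)) ++ g B)
            (List.range (l.length - 1)) := by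
          have h3 : List.Perm ((g a).map (· + (l.length - 1 - k)) ++ g B)
              (g B ++ (g a).map (· + (l.length - 1 - k))) := List.perm_append_comm
          have h4 := pB.append pA
          have h5 := h3.trans h4
          rwa [← List.range_add,
            show l.length - 1 - k + k = l.length - 1 by omega] at h5
        have p3 : List.Perm ((l.length - 1) :: List.range (l.length - 1))
            (List.range l.length) := by
          have e : List.range l.length = List.range (l.length - 1) ++ (l.length - 1) :: [] := by
            conv_lhs => rw [show l.length = (l.length - 1) + 1 by omega]
            rw [List.range_succ]
          rw [e]
          exact (List.perm_middle.trans (by rw [List.append_nil])).symm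
        exact (p1.trans ((p2.cons _))).trans p3
      · -- Av132L (g l)
        rw [g_eq hm hkdef]
        apply av132_build
        · intro u hu; exact (hGAv u hu).2
        · intro v hv; have := hGBv v hv; omega
        · intro u hu v hv
          have h1 := (hGAv u hu).1
          have h2 := hGBv v hv
          omega
        · exact av1.map _ (fun u _ v _ h => by omega)
        · exact av2
      · -- DesL
        rw [g_eq hm hkdef]
        conv_rhs => rw [hsplit]
        rw [des_decomp _ _ _ (fun u hu => (hGAv u hu).2)
            (fun v hv => by have := hGBv v hv; omega),
          des_decomp _ _ _ (fun u hu => by have := hasmall u hu; omega)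
            (fun v hv => by have := hbbig v hv; omega)]
        have d1 : DesL ((g a).map (· + (l.length - 1 - k))) = DesL a := by
          rw [DesL_map _ (fun u _ v _ => by omega), des1]
        have d2 : DesL (g B) = DesL b := by
          rw [des2, hBdef]
          apply DesL_map
          intro u hu v hv
          have h1 := hbbig u hu
          have h2 := hbbig v hv
          omega
        rw [d1, d2, eGA, eGB, hlt, hld]
      · -- f (g l) = l
        have hmem : (g l).length - 1 ∈ g l := by
          rw [glen, g_eq hm hkdef]
          exact List.mem_append.2 (Or.inr (List.mem_cons_self))
        have hidx : List.idxOf ((g l).length - 1) (g l) = k := by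
          rw [glen, g_eq hm hkdef]
          rw [indexOf_concat (fun hc => by have := (hGAv _ hc).2; omega), eGA]
        rw [f_eq hmem hidx.symm]
        have e1 : (g l).take k = (g a).map (· + (l.length - 1 - k)) := by
          rw [g_eq hm hkdef]
          exact List.take_left' eGA
        have e2 : (g l).drop (k + 1) = g B := by
          rw [g_eq hm hkdef]
          have : (g a).map (· + (l.length - 1 - k)) ++ (l.length - 1) :: g B
              = ((g a).map (· + (l.length - 1 - k)) ++ [l.length - 1]) ++ g B := by simp
          rw [this]
          exact List.drop_left' (by rw [List.length_append, eGA]; simp)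
        rw [e1, e2, finv2, glen]
        have e3 : ((g a).map (· + (l.length - 1 - k))).map (· - (l.length - 1 - k)) = g a := by
          rw [List.map_map]
          have : ∀ x ∈ g a, ((· - (l.length - 1 - k)) ∘ (· + (l.length - 1 - k))) x = id x :=
            fun x _ => by simp
          rw [List.map_congr_left this, List.map_id]
        rw [e3, finv1]
        have e4 : B.map (· + k) = b := by
          rw [hBdef, List.map_map]
          have : ∀ x ∈ b, ((· + k) ∘ (· - k)) x = id x := by
            intro x hx
            have := hbbig x hx
            simp only [Function.comp_apply, id_eq]
            omega
          rw [List.map_congr_left this, List.map_id]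
        rw [e4]
        exact hsplit.symm

end PP

namespace PP

variable {n : ℕ}

noncomputable def toL (σ : Equiv.Perm (Fin n)) : List ℕ := List.ofFn (fun i => (σ i : ℕ))

lemma toL_length (σ : Equiv.Perm (Fin n)) : (toL σ).length = n := List.length_ofFn

lemma toL_nth (σ : Equiv.Perm (Fin n)) {i : ℕ} (h : i < n) :
    nth (toL σ) i = σ ⟨i, h⟩ := by
  unfold toL
  rw [nth_eq _ (by rw [List.length_ofFn]; exact h), List.getElem_ofFn]

lemma toL_nth_fin (σ : Equiv.Perm (Fin n)) (i : Fin n) :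
    nth (toL σ) (i : ℕ) = σ i := by
  rw [toL_nth σ i.2]

lemma toL_isPermL (σ : Equiv.Perm (Fin n)) : IsPermL (toL σ) := by
  apply isPermL_of
  · unfold toL
    rw [List.nodup_ofFn]
    intro i j hij
    exact σ.injective (Fin.ext (by simpa using hij))
  · intro x hx
    rw [toL_length]
    unfold toL at hx
    rw [List.mem_ofFn] at hx
    obtain ⟨i, rfl⟩ := hx
    exact (σ i).2

lemma toL_av132 {σ : Equiv.Perm (Fin n)} (h : Avoids132 σ) : Av132L (toL σ) := by
  intro i j k hij hjk hk hc
  rw [toL_length] at hk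
  have e1 : nth (toL σ) i = σ ⟨i, by omega⟩ := toL_nth σ (by omega)
  have e2 : nth (toL σ) j = σ ⟨j, by omega⟩ := toL_nth σ (by omega)
  have e3 : nth (toL σ) k = σ ⟨k, hk⟩ := toL_nth σ hk
  simp only [e1, e2, e3] at hc
  exact h ⟨⟨i, by omega⟩, ⟨j, by omega⟩, ⟨k, hk⟩, hij, hjk,
    by exact_mod_cast hc.1, by exact_mod_cast hc.2⟩

lemma toL_av231 {σ : Equiv.Perm (Fin n)} (h : Avoids231 σ) : Av231L (toL σ) := by
  intro i j k hij hjk hk hc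
  rw [toL_length] at hk
  have e1 : nth (toL σ) i = σ ⟨i, by omega⟩ := toL_nth σ (by omega)
  have e2 : nth (toL σ) j = σ ⟨j, by omega⟩ := toL_nth σ (by omega)
  have e3 : nth (toL σ) k = σ ⟨k, hk⟩ := toL_nth σ hk
  simp only [e1, e2, e3] at hc
  exact h ⟨⟨i, by omega⟩, ⟨j, by omega⟩, ⟨k, hk⟩, hij, hjk,
    by exact_mod_cast hc.1, by exact_mod_cast hc.2⟩

lemma av132_toL {σ : Equiv.Perm (Fin n)} (h : Av132L (toL σ)) : Avoids132 σ := by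
  rintro ⟨i, j, k, hij, hjk, h1, h2⟩
  refine h i j k hij hjk (by rw [toL_length]; exact k.2) ?_
  rw [toL_nth_fin, toL_nth_fin, toL_nth_fin]
  exact ⟨by exact_mod_cast h1, by exact_mod_cast h2⟩

lemma av231_toL {σ : Equiv.Perm (Fin n)} (h : Av231L (toL σ)) : Avoids231 σ := by
  rintro ⟨i, j, k, hij, hjk, h1, h2⟩
  refine h i j k hij hjk (by rw [toL_length]; exact k.2) ?_
  rw [toL_nth_fin, toL_nth_fin, toL_nth_fin]
  exact ⟨by exact_mod_cast h1, by exact_mod_cast h2⟩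

lemma permDes_eq_DesL (σ : Equiv.Perm (Fin n)) : permDes n σ = DesL (toL σ) := by
  unfold permDes DesL
  rw [toL_length]
  apply Finset.filter_congr
  intro i hi
  rw [Finset.mem_Ico] at hi
  constructor
  · intro h
    have h' := h hi.2
    rw [toL_nth σ hi.2, toL_nth σ (show i - 1 < n by omega)]
    exact_mod_cast h'
  · intro h hh
    rw [toL_nth σ hi.2, toL_nth σ (show i - 1 < n by omega)] at h
    exact_mod_cast h

noncomputable def ofL (n : ℕ) (L : List ℕ) (hP : IsPermL L) (hlen : L.length = n) :
    Equiv.Perm (Fin n) :=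
  Equiv.ofBijective
    (fun i => (⟨nth L i, by
      have h1 : (i : ℕ) < L.length := by rw [hlen]; exact i.2
      have h2 := hP.nth_lt h1
      omega⟩ : Fin n))
    (Finite.injective_iff_bijective.1 (by
      intro i j hij
      by_contra hne
      exact hP.nth_inj (by rw [hlen]; exact i.2) (by rw [hlen]; exact j.2)
        (fun hc => hne (Fin.ext hc)) (by simpa using hij)))

lemma ofL_apply (n : ℕ) (L : List ℕ) (hP : IsPermL L) (hlen : L.length = n) (i : Fin n) :
    (ofL n L hP hlen i : ℕ) = nth L i := rfl

lemma toL_ofL (n : ℕ) (L : List ℕ) (hP : IsPermL L) (hlen : L.length = n) :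
    toL (ofL n L hP hlen) = L := by
  apply List.ext_getElem (by rw [toL_length, hlen])
  intro i h1 h2
  rw [toL_length] at h1
  have e : nth (toL (ofL n L hP hlen)) i = nth L i := by
    rw [toL_nth _ h1]
    rfl
  rw [nth_eq _ (by rw [toL_length]; exact h1), nth_eq _ h2] at e
  exact e

lemma ofL_congr {n : ℕ} {L L' : List ℕ} (hP : IsPermL L) (hlen : L.length = n)
    (hP' : IsPermL L') (hlen' : L'.length = n) (h : L = L') :
    ofL n L hP hlen = ofL n L' hP' hlen' := by
  subst h
  rfl

lemma ofL_toL (σ : Equiv.Perm (Fin n)) (hP : IsPermL (toL σ)) (hlen : (toL σ).length = n) :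
    ofL n (toL σ) hP hlen = σ := by
  apply Equiv.ext
  intro i
  apply Fin.ext
  rw [ofL_apply, toL_nth_fin]

end PP

namespace PP

lemma toL_inj {n : ℕ} {σ τ : Equiv.Perm (Fin n)} (h : toL σ = toL τ) : σ = τ := by
  apply Equiv.ext
  intro i
  apply Fin.ext
  rw [← toL_nth_fin σ i, ← toL_nth_fin τ i, h]

noncomputable def FF (n : ℕ) (s : {σ : Equiv.Perm (Fin n) // Avoids132 σ}) :
    {σ : Equiv.Perm (Fin n) // Avoids231 σ} :=
  ⟨ofL n (f (toL s.1))
      (main_f (toL s.1).length (toL s.1) le_rfl (toL_isPermL s.1) (toL_av132 s.2)).2.1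
      (by rw [(main_f (toL s.1).length (toL s.1) le_rfl (toL_isPermL s.1)
          (toL_av132 s.2)).1, toL_length]),
    av231_toL (by
      rw [toL_ofL]
      exact (main_f (toL s.1).length (toL s.1) le_rfl (toL_isPermL s.1)
        (toL_av132 s.2)).2.2.1)⟩

noncomputable def GG (n : ℕ) (s : {σ : Equiv.Perm (Fin n) // Avoids231 σ}) :
    {σ : Equiv.Perm (Fin n) // Avoids132 σ} :=
  ⟨ofL n (g (toL s.1))
      (main_g (toL s.1).length (toL s.1) le_rfl (toL_isPermL s.1) (toL_av231 s.2)).2.1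
      (by rw [(main_g (toL s.1).length (toL s.1) le_rfl (toL_isPermL s.1)
          (toL_av231 s.2)).1, toL_length]),
    av132_toL (by
      rw [toL_ofL]
      exact (main_g (toL s.1).length (toL s.1) le_rfl (toL_isPermL s.1)
        (toL_av231 s.2)).2.2.1)⟩

lemma toL_FF (n : ℕ) (s : {σ : Equiv.Perm (Fin n) // Avoids132 σ}) :
    toL (FF n s).1 = f (toL s.1) := by
  have h := toL_ofL n (f (toL s.1))
      (main_f (toL s.1).length (toL s.1) le_rfl (toL_isPermL s.1) (toL_av132 s.2)).2.1
      (by rw [(main_f (toL s.1).length (toL s.1) le_rfl (toL_isPermL s.1)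
          (toL_av132 s.2)).1, toL_length])
  exact h

lemma toL_GG (n : ℕ) (s : {σ : Equiv.Perm (Fin n) // Avoids231 σ}) :
    toL (GG n s).1 = g (toL s.1) := by
  have h := toL_ofL n (g (toL s.1))
      (main_g (toL s.1).length (toL s.1) le_rfl (toL_isPermL s.1) (toL_av231 s.2)).2.1
      (by rw [(main_g (toL s.1).length (toL s.1) le_rfl (toL_isPermL s.1)
          (toL_av231 s.2)).1, toL_length])
  exact h

lemma GG_FF (n : ℕ) (s : {σ : Equiv.Perm (Fin n) // Avoids132 σ}) : GG n (FF n s) = s := by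
  apply Subtype.ext
  apply toL_inj
  rw [toL_GG, toL_FF]
  exact (main_f (toL s.1).length (toL s.1) le_rfl (toL_isPermL s.1)
    (toL_av132 s.2)).2.2.2.2

lemma FF_GG (n : ℕ) (s : {σ : Equiv.Perm (Fin n) // Avoids231 σ}) : FF n (GG n s) = s := by
  apply Subtype.ext
  apply toL_inj
  rw [toL_FF, toL_GG]
  exact (main_g (toL s.1).length (toL s.1) le_rfl (toL_isPermL s.1)
    (toL_av231 s.2)).2.2.2.2

lemma FF_des (n : ℕ) (s : {σ : Equiv.Perm (Fin n) // Avoids132 σ}) :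
    permDes n (FF n s).1 = permDes n s.1 := by
  rw [permDes_eq_DesL, permDes_eq_DesL, toL_FF]
  exact (main_f (toL s.1).length (toL s.1) le_rfl (toL_isPermL s.1)
    (toL_av132 s.2)).2.2.2.1

end PP


/-- There is a descent-set-preserving bijection between 132-avoiding and 231-avoiding
permutations of length `n`; consequently the bivariate `(maj, des)` generating functions
over `S_n(132)` and `S_n(231)` coincide. -/
theorem descent_preserving_bijection_132_231 (n : ℕ) :
    (∃ Φ : {σ : Equiv.Perm (Fin n) // Avoids132 σ} ≃ {σ : Equiv.Perm (Fin n) // Avoids231 σ},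
        ∀ σ, permDes n (Φ σ).1 = permDes n σ.1) ∧
      bivarGF n (fun σ => Avoids132 σ) = bivarGF n (fun σ => Avoids231 σ) := by
  constructor
  · exact ⟨⟨PP.FF n, PP.GG n, PP.GG_FF n, PP.FF_GG n⟩, PP.FF_des n⟩
  · unfold bivarGF
    refine Finset.sum_bij'
      (fun σ hσ => (PP.FF n ⟨σ, (Finset.mem_filter.1 hσ).2⟩).1)
      (fun τ hτ => (PP.GG n ⟨τ, (Finset.mem_filter.1 hτ).2⟩).1) ?_ ?_ ?_ ?_ ?_
    · intro a ha
      exact Finset.mem_filter.2 ⟨Finset.mem_univ _, (PP.FF n ⟨a, (Finset.mem_filter.1 ha).2⟩).2⟩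
    · intro a ha
      exact Finset.mem_filter.2 ⟨Finset.mem_univ _, (PP.GG n ⟨a, (Finset.mem_filter.1 ha).2⟩).2⟩
    · intro a ha
      exact congrArg Subtype.val (PP.GG_FF n ⟨a, (Finset.mem_filter.1 ha).2⟩)
    · intro a ha
      exact congrArg Subtype.val (PP.FF_GG n ⟨a, (Finset.mem_filter.1 ha).2⟩)
    · intro a ha
      have e := PP.FF_des n ⟨a, (Finset.mem_filter.1 ha).2⟩
      simp only [permMaj, e]
end

section
/- If a polynomial f(q) with nonnegative integer coefficients is such that g(q) = f(q)·(1+q+...+q^{i-1}) is symmetric (palindromic), then f(q) is symmetric. -/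
open Polynomial

/-- A polynomial is palindromic (symmetric): coefficients at positions summing to
`natTrailingDegree + natDegree` agree, i.e. `f(q) = q^{n+a} f(1/q)` where `a, n` are the
lowest and highest degrees. -/
def Palindromic (p : Polynomial ℕ) : Prop :=
  ∀ j k : ℕ, j + k = p.natTrailingDegree + p.natDegree → p.coeff j = p.coeff k


private lemma coeff_geomS (i k : ℕ) :
    (∑ j ∈ Finset.range i, (X : ℕ[X]) ^ j).coeff k = if k < i then 1 else 0 := by
  simp [finset_sum_coeff, coeff_X_pow, Finset.sum_ite_eq, Finset.mem_range]

private lemma palindromic_iff_reflect (p : ℕ[X]) :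
    (∀ j k : ℕ, j + k = p.natTrailingDegree + p.natDegree → p.coeff j = p.coeff k) ↔
      reflect (p.natTrailingDegree + p.natDegree) p = p := by
  constructor
  · intro h
    ext k
    rw [coeff_reflect]
    rcases le_or_gt k (p.natTrailingDegree + p.natDegree) with hk | hk
    · rw [revAt_le hk]
      exact h _ _ (by omega)
    · rw [revAt_eq_self_of_lt hk]
  · intro h j k hjk
    have := congrArg (fun q => Polynomial.coeff q j) h
    simp only [coeff_reflect] at this
    rw [← this, revAt_le (by omega : j ≤ p.natTrailingDegree + p.natDegree)]
    congr 1
    omega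

theorem palindromic_of_mul_geom' (i : ℕ) (hi : 1 ≤ i) (f : Polynomial ℕ) (hf : f ≠ 0)
    (h : ∀ j k : ℕ, j + k = (f * ∑ j ∈ Finset.range i, Polynomial.X ^ j).natTrailingDegree
      + (f * ∑ j ∈ Finset.range i, Polynomial.X ^ j).natDegree →
      (f * ∑ j ∈ Finset.range i, Polynomial.X ^ j).coeff j
        = (f * ∑ j ∈ Finset.range i, Polynomial.X ^ j).coeff k) :
    ∀ j k : ℕ, j + k = f.natTrailingDegree + f.natDegree → f.coeff j = f.coeff k := by
  set s : ℕ[X] := ∑ j ∈ Finset.range i, (X : ℕ[X]) ^ j with hs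
  have hs0 : s ≠ 0 := by
    intro h0
    have := coeff_geomS i 0
    rw [← hs, h0, if_pos (by omega : (0:ℕ) < i)] at this
    simp at this
  have hsd : s.natDegree = i - 1 := by
    apply le_antisymm
    · apply natDegree_le_iff_coeff_eq_zero.mpr
      intro N hN
      rw [hs, coeff_geomS]
      simp only [ite_eq_right_iff]
      omega
    · apply le_natDegree_of_ne_zero
      rw [hs, coeff_geomS, if_pos (by omega : i - 1 < i)]
      exact one_ne_zero
  have hst : s.natTrailingDegree = 0 :=
    natTrailingDegree_eq_zero.mpr (Or.inr (by rw [hs, coeff_geomS, if_pos (by omega : (0:ℕ) < i)]; exact one_ne_zero))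
  have hrs : reflect (i - 1) s = s := by
    ext k
    rw [coeff_reflect, hs]
    rcases le_or_gt k (i - 1) with hk | hk
    · rw [revAt_le hk, coeff_geomS, coeff_geomS]
      have : i - 1 - k < i ∧ k < i := by omega
      simp [this.1, this.2]
    · rw [revAt_eq_self_of_lt hk]
  -- degrees of product
  have hgd : (f * s).natDegree = f.natDegree + (i - 1) := by
    rw [natDegree_mul hf hs0, hsd]
  have hgt : (f * s).natTrailingDegree = f.natTrailingDegree := by
    rw [natTrailingDegree_mul hf hs0, hst, add_zero]
  have hg : reflect (f.natTrailingDegree + f.natDegree + (i - 1)) (f * s) = f * s := by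
    have := (palindromic_iff_reflect (f * s)).mp h
    rwa [hgd, hgt, ← add_assoc] at this
  rw [reflect_mul f s (by omega) (by omega), hrs] at hg
  -- cancel s over ℤ
  have key : reflect (f.natTrailingDegree + f.natDegree) f = f := by
    have hinj : Function.Injective (Polynomial.map (Nat.castRingHom ℤ)) :=
      Polynomial.map_injective _ Nat.cast_injective
    apply hinj
    have h2 := congrArg (Polynomial.map (Nat.castRingHom ℤ)) hg
    rw [Polynomial.map_mul, Polynomial.map_mul] at h2
    have hs0' : s.map (Nat.castRingHom ℤ) ≠ 0 := fun h0 => hs0 (hinj (by simp [h0]))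
    exact mul_right_cancel₀ hs0' h2
  exact (palindromic_iff_reflect f).mpr key

/-- If `f` has nonnegative integer coefficients and `f(q)·(1 + q + ⋯ + q^{i-1})` is
symmetric, then `f` is symmetric. -/
theorem palindromic_of_mul_geom (i : ℕ) (hi : 1 ≤ i) (f : Polynomial ℕ) (hf : f ≠ 0)
    (h : Palindromic (f * ∑ j ∈ Finset.range i, Polynomial.X ^ j)) :
    Palindromic f :=
  palindromic_of_mul_geom' i hi f hf h
end
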